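/- arXiv:1908.06428 — 6 statements merged into one kernel-verified Lean document; each statement's English description precedes it below -/
import Mathlib

section
/- For every nonempty word w and every k ≥ 1, the number of distinct factors of w of length k is at most g(w)·k. -/
/-- A straight-line program over alphabet `α`, in topologically-sorted form:
nonterminals are `Fin n`, each has exactly one nonempty right-hand side, and
right-hand sides only refer to strictly smaller nonterminals (acyclicity). -/
structure SLP (α : Type) where
  n : ℕ
  rhs : Fin n → List (α ⊕ Fin n)
  rhs_ne : ∀ i, rhs i ≠ []
  acyc : ∀ i j, Sum.inr j ∈ rhs i → (j : ℕ) < (i : ℕ)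
  start : Fin n

namespace SLP

variable {α : Type}

/-- The word produced by nonterminal `i`. -/
def valAux (G : SLP α) (i : Fin G.n) : List α :=
  (G.rhs i).attach.flatMap (fun s =>
    match s with
    | ⟨Sum.inl a, _⟩ => [a]
    | ⟨Sum.inr j, hj⟩ => G.valAux j)
termination_by (i : ℕ)
decreasing_by exact G.acyc i j hj

/-- The word produced by the SLP. -/
def val (G : SLP α) : List α := G.valAux G.start

/-- The size of the SLP: sum of lengths of all right-hand sides. -/
def size (G : SLP α) : ℕ := ∑ i : Fin G.n, (G.rhs i).length

end SLP

/-- `g w`: the minimal size of an SLP producing `w`. -/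
noncomputable def g {α : Type} (w : List α) : ℕ :=
  sInf { s | ∃ G : SLP α, G.size = s ∧ G.val = w }

/-! ### Auxiliary material -/

open List

lemma SLPaux.infix_iff' {α : Type} (u v : List α) :
    u <:+: v ↔ ∃ s, s + u.length ≤ v.length ∧ u = (v.drop s).take u.length := by
  constructor
  · rintro ⟨t, s, rfl⟩
    refine ⟨t.length, by simp, ?_⟩
    rw [List.append_assoc, List.drop_left, List.take_left]
  · rintro ⟨s, hs, hu⟩
    refine ⟨v.take s, (v.drop s).drop u.length, .symm ?_⟩
    calc v = v.take s ++ ((v.drop s).take u.length ++ (v.drop s).drop u.length) := by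
            rw [take_append_drop, take_append_drop]
      _ = v.take s ++ u ++ (v.drop s).drop u.length := by rw [← hu, append_assoc]

open SLPaux in
lemma SLPaux.join_dichotomy {α : Type} (k : ℕ) (hk : 1 ≤ k) :
    ∀ (L : List (List α)) (u : List α), u.length = k → u <:+: L.flatten →
    (∃ j : Fin L.length, u <:+: L.get j ∧ k < (L.get j).length) ∨
    (∃ j : Fin L.length, ∃ t : Fin k, (t : ℕ) + 1 ≤ ((L.take ((j : ℕ)+1)).flatten).length ∧
      u = ((L.flatten.drop (((L.take ((j : ℕ)+1)).flatten).length - 1 - (t : ℕ))).take k)) := by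
  intro L
  induction L with
  | nil =>
    intro u hlen h
    simp only [flatten_nil] at h
    rw [show u = [] from List.eq_nil_of_infix_nil h] at hlen
    simp at hlen; omega
  | cons l L' ih =>
    intro u hlen h
    rw [infix_iff', hlen] at h
    obtain ⟨s, hs, hu⟩ := h
    simp only [flatten_cons, length_append] at hs hu
    by_cases hls : l.length ≤ s
    · have h2 : u <:+: L'.flatten := by
        rw [infix_iff', hlen]
        refine ⟨s - l.length, by omega, ?_⟩
        rw [show s = l.length + (s - l.length) by omega, List.drop_length_add_append] at hu
        exact hu
      rcases ih u hlen h2 with ⟨j, hj1, hj2⟩ | ⟨j, t, ht1, ht2⟩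
      · left; exact ⟨j.succ, by simpa using hj1, by simpa using hj2⟩
      · right
        refine ⟨j.succ, t, ?_, ?_⟩
        · simp only [Fin.val_succ, List.take_succ_cons, flatten_cons, length_append]
          omega
        · simp only [Fin.val_succ, List.take_succ_cons, flatten_cons, length_append]
          rw [show l.length + ((L'.take ((j:ℕ)+1)).flatten).length - 1 - (t:ℕ)
              = l.length + ((((L'.take ((j:ℕ)+1)).flatten).length) - 1 - (t:ℕ)) by omega,
            List.drop_length_add_append]
          exact ht2
    · push_neg at hls
      by_cases h3 : s + k < l.length
      · left
        refine ⟨⟨0, by simp⟩, ?_, ?_⟩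
        · rw [infix_iff', hlen]
          refine ⟨s, by simpa using by omega, ?_⟩
          rw [hu]
          rw [List.drop_append_of_le_length (by omega),
              List.take_append_of_le_length (by simp [length_drop]; omega)]
          rfl
        · simpa using by omega
      · right
        push_neg at h3
        refine ⟨⟨0, by simp⟩, ⟨l.length - 1 - s, by omega⟩, ?_, ?_⟩
        · simp; omega
        · have e1 : (((l :: L').take (0+1)).flatten).length = l.length := by simp
          rw [e1, show l.length - 1 - (l.length - 1 - s) = s by omega, flatten_cons]
          exact hu

namespace SLP

variable {α : Type}

/-- Expansion of a single grammar symbol. -/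
def expand (G : SLP α) : α ⊕ Fin G.n → List α
  | Sum.inl a => [a]
  | Sum.inr j => G.valAux j

lemma valAux_eq (G : SLP α) (i : Fin G.n) :
    G.valAux i = ((G.rhs i).map G.expand).flatten := by
  rw [valAux, List.flatMap_def]
  congr 1
  conv_rhs => rw [← List.attach_map_subtype_val (G.rhs i), List.map_map]
  apply List.map_congr_left
  rintro ⟨x, hx⟩ _
  cases x <;> rfl

variable [DecidableEq α]

/-- Boundary factors of nonterminal `i`: length-`k` windows containing the last
position of some piece of the right-hand side of `i`. -/
def bset (G : SLP α) (k : ℕ) (i : Fin G.n) : Finset (List α) :=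
  Finset.image (fun p : Fin (G.rhs i).length × Fin k =>
    ((G.valAux i).drop
      ((((((G.rhs i).map G.expand).take ((p.1 : ℕ)+1)).flatten).length) - 1 - (p.2 : ℕ))).take k)
    Finset.univ

lemma mem_bset (G : SLP α) (k : ℕ) (hk : 1 ≤ k) :
    ∀ N, ∀ i : Fin G.n, (i : ℕ) < N → ∀ u : List α, u.length = k → u <:+: G.valAux i →
      u ∈ Finset.univ.biUnion (G.bset k) := by
  intro N
  induction N with
  | zero => omega
  | succ N ih =>
    intro i hi u hlen hu
    rw [valAux_eq] at hu
    rcases SLPaux.join_dichotomy k hk _ u hlen hu with ⟨j, hj1, hj2⟩ | ⟨j, t, ht1, ht2⟩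
    · have hjlen : (j : ℕ) < (G.rhs i).length := by simpa using j.isLt
      have hget : ((G.rhs i).map G.expand).get j = G.expand ((G.rhs i).get ⟨j, hjlen⟩) := by
        simp
      cases hx : (G.rhs i).get ⟨j, hjlen⟩ with
      | inl a => rw [hget, hx] at hj2; simp [expand] at hj2; omega
      | inr j' =>
        have hmem : Sum.inr j' ∈ G.rhs i := by rw [← hx]; exact List.get_mem ..
        have hlt : (j' : ℕ) < (i : ℕ) := G.acyc i j' hmem
        refine ih j' (by omega) u hlen ?_
        rw [hget, hx] at hj1
        exact hj1
    · refine Finset.mem_biUnion.2 ⟨i, Finset.mem_univ i, ?_⟩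
      apply Finset.mem_image.2
      have hjlen : (j : ℕ) < (G.rhs i).length := by simpa using j.isLt
      exact ⟨(⟨(j : ℕ), hjlen⟩, t), Finset.mem_univ _, by rw [valAux_eq]; exact ht2.symm⟩

end SLP

/-- The trivial SLP producing `w`. -/
def SLPaux.triv {α : Type} (w : List α) (hw : w ≠ []) : SLP α where
  n := 1
  rhs := fun _ => w.map Sum.inl
  rhs_ne := fun _ => by simpa using hw
  acyc := by intro i j hj; simp at hj
  start := 0

lemma SLPaux.triv_val {α : Type} (w : List α) (hw : w ≠ []) : (SLPaux.triv w hw).val = w := by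
  rw [SLP.val, SLP.valAux_eq]
  show ((w.map Sum.inl).map (SLPaux.triv w hw).expand).flatten = w
  rw [List.map_map, ← List.flatMap_def]
  have : ((SLPaux.triv w hw).expand ∘ Sum.inl : α → List α) = fun a => [a] := by
    funext a; rfl
  rw [this]
  simp

/-- A word `w` has at most `g w * k` distinct factors of length `k ≥ 1`.
Every factor of length `k` arises as `t.take k` for some tail `t` of `w`. -/
theorem factors_le {α : Type} [DecidableEq α] (w : List α) (hw : w ≠ []) (k : ℕ) (hk : 1 ≤ k) :
    (((w.tails.map (fun t => t.take k)).toFinset).filter (fun v => v.length = k)).card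
      ≤ g w * k := by
  have hne : { s | ∃ G : SLP α, G.size = s ∧ G.val = w }.Nonempty :=
    ⟨(SLPaux.triv w hw).size, SLPaux.triv w hw, rfl, SLPaux.triv_val w hw⟩
  obtain ⟨G, hGsize, hGval⟩ := Nat.sInf_mem hne
  have hsub : ((w.tails.map (fun t => t.take k)).toFinset).filter (fun v => v.length = k)
      ⊆ Finset.univ.biUnion (G.bset k) := by
    intro v hv
    simp only [Finset.mem_filter, List.mem_toFinset, List.mem_map] at hv
    obtain ⟨⟨t, ht, rfl⟩, hlen⟩ := hv
    rw [List.mem_tails] at ht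
    have hinf : t.take k <:+: w := (List.take_prefix k t).isInfix.trans ht.isInfix
    refine G.mem_bset k hk G.n G.start G.start.isLt _ hlen ?_
    rw [show G.valAux G.start = w from hGval]
    exact hinf
  calc (((w.tails.map (fun t => t.take k)).toFinset).filter (fun v => v.length = k)).card
      ≤ (Finset.univ.biUnion (G.bset k)).card := Finset.card_le_card hsub
    _ ≤ ∑ i : Fin G.n, (G.bset k i).card := Finset.card_biUnion_le
    _ ≤ ∑ i : Fin G.n, (G.rhs i).length * k := by
        refine Finset.sum_le_sum fun i _ => ?_
        calc (G.bset k i).card ≤ (Finset.univ : Finset (Fin (G.rhs i).length × Fin k)).card :=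
              Finset.card_image_le
          _ = (G.rhs i).length * k := by simp
    _ = G.size * k := by rw [SLP.size, Finset.sum_mul]
    _ = g w * k := by rw [hGsize]; rfl
end

section
/- For every word w over an alphabet of size σ ≥ 2 of length n ≥ 2, there exists an SLP producing w of size at most C · n·log σ / log n for some absolute constant C. -/
lemma SLP.valAux_eq_s5 {α : Type} (G : SLP α) (i : Fin G.n) :
    G.valAux i = (G.rhs i).flatMap (Sum.elim (fun a => [a]) G.valAux) := by
  rw [valAux]
  have h1 : (fun s : {x // x ∈ G.rhs i} =>
      match s with
      | ⟨Sum.inl a, _⟩ => [a]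
      | ⟨Sum.inr j, hj⟩ => G.valAux j) =
      fun s : {x // x ∈ G.rhs i} => Sum.elim (fun a => [a]) G.valAux s.1 := by
    funext s
    rcases s with ⟨s | s, h⟩ <;> rfl
  rw [h1]
  conv_rhs => rw [← List.attach_map_subtype_val (G.rhs i)]
  rw [List.flatMap_map]




lemma flatMap_map_inl {α : Type} {n : ℕ} (f : Fin n → List α) (l : List α) :
    (l.map (Sum.inl : α → α ⊕ Fin n)).flatMap (Sum.elim (fun a => [a]) f) = l := by
  rw [List.flatMap_map]
  simp

/-- The trivial SLP producing `w` directly. -/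
def trivSLP {α : Type} (w : List α) (hw : w ≠ []) : SLP α where
  n := 1
  rhs := fun _ => w.map Sum.inl
  rhs_ne := fun _ => by simpa using hw
  acyc := fun i j hj => by simp at hj
  start := 0

lemma trivSLP_val {α : Type} (w : List α) (hw : w ≠ []) : (trivSLP w hw).val = w := by
  rw [SLP.val, SLP.valAux_eq_s5]
  exact flatMap_map_inl _ w

lemma trivSLP_size {α : Type} (w : List α) (hw : w ≠ []) : (trivSLP w hw).size = w.length := by
  show ∑ _i : Fin 1, (w.map (Sum.inl : α → α ⊕ Fin 1)).length = w.length
  simp [SLP.size, trivSLP, Finset.card_univ]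

section Main
variable {α : Type} [Fintype α]

/-- the `j`-th block of `w`, of length `b`. -/
def blk (w : List α) (d : α) (b j : ℕ) : Fin b → α := fun t => w.getD (j * b + t) d

noncomputable def enc (α : Type) [Fintype α] (b : ℕ) :
    (Fin b → α) ≃ Fin (Fintype.card (Fin b → α)) := Fintype.equivFin _

noncomputable def mainSLP (w : List α) (d : α) (b : ℕ) (hb : 0 < b) (hw : w ≠ []) : SLP α where
  n := Fintype.card (Fin b → α) + 1
  rhs := fun i =>
    if h : (i : ℕ) < Fintype.card (Fin b → α) then
      List.ofFn (fun t => Sum.inl ((enc α b).symm ⟨i, h⟩ t))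
    else
      ((List.range (w.length / b)).map fun j => Sum.inr ((enc α b (blk w d b j)).castSucc))
        ++ (w.drop (w.length / b * b)).map Sum.inl
  rhs_ne := by
    intro i
    by_cases h : (i : ℕ) < Fintype.card (Fin b → α)
    · rw [dif_pos h]
      simp [List.ofFn_eq_nil_iff]
      omega
    · rw [dif_neg h]
      rcases Nat.eq_zero_or_pos (w.length / b) with hk | hk
      · simp [hk, hw]
      · simp only [ne_eq, List.append_eq_nil_iff, List.map_eq_nil_iff, List.range_eq_nil]
        intro ⟨h1, _⟩
        omega
  acyc := by
    intro i j hj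
    by_cases h : (i : ℕ) < Fintype.card (Fin b → α)
    · rw [dif_pos h] at hj
      simp [List.mem_ofFn] at hj
    · rw [dif_neg h] at hj
      have hi : (i : ℕ) = Fintype.card (Fin b → α) := by omega
      rw [List.mem_append] at hj
      rcases hj with hj | hj
      · simp only [List.mem_map] at hj
        obtain ⟨x, _, hx⟩ := hj
        have : j = ((enc α b) (blk w d b x)).castSucc := (Sum.inr.inj hx).symm
        rw [this, hi]
        simpa using (enc α b (blk w d b x)).isLt
      · simp only [List.mem_map] at hj
        obtain ⟨a, _, ha⟩ := hj
        exact absurd ha (by simp)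
  start := ⟨Fintype.card (Fin b → α), Nat.lt_succ_self _⟩

variable (w : List α) (d : α) (b : ℕ) (hb : 0 < b) (hw : w ≠ [])

lemma mainSLP_rhs_dict (v : Fin b → α) :
    (mainSLP w d b hb hw).rhs ((enc α b v).castSucc) =
      List.ofFn (fun t => Sum.inl (v t)) := by
  have h : ((enc α b v).castSucc : ℕ) < Fintype.card (Fin b → α) := (enc α b v).isLt
  show dite _ _ _ = _
  erw [dif_pos h]
  congr 1
  funext t
  congr 1
  have : (⟨((enc α b v).castSucc : ℕ), h⟩ : Fin (Fintype.card (Fin b → α))) = enc α b v := by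
    apply Fin.ext; rfl
  rw [this, Equiv.symm_apply_apply]

lemma mainSLP_valAux_dict (v : Fin b → α) :
    (mainSLP w d b hb hw).valAux ((enc α b v).castSucc) = List.ofFn v := by
  erw [SLP.valAux_eq_s5, mainSLP_rhs_dict]
  have : List.ofFn (fun t => (Sum.inl (v t) : α ⊕ Fin (mainSLP w d b hb hw).n)) =
      (List.ofFn v).map Sum.inl := by
    rw [List.map_ofFn]; rfl
  rw [this, flatMap_map_inl]

lemma blocks_join (k : ℕ) (hk : k * b ≤ w.length) :
    (List.range k).flatMap (fun j => List.ofFn (blk w d b j)) = w.take (k * b) := by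
  induction k with
  | zero => simp
  | succ k ih =>
    have hkb : k * b + b ≤ w.length := by
      have : (k + 1) * b = k * b + b := by ring
      omega
    have hk' : k * b ≤ w.length := by omega
    rw [List.range_succ, List.flatMap_append, ih hk']
    have hofn : List.ofFn (blk w d b k) = (w.drop (k * b)).take b := by
      apply List.ext_getElem
      · simp
        omega
      · intro i h1 h2
        simp only [List.length_ofFn] at h1
        simp only [List.getElem_ofFn, List.getElem_take, List.getElem_drop, blk]
        rw [List.getD_eq_getElem w d (by omega)]
    rw [show (k+1) * b = k * b + b by ring, List.take_add]
    simp [hofn]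

lemma mainSLP_rhs_start :
    (mainSLP w d b hb hw).rhs ⟨Fintype.card (Fin b → α), Nat.lt_succ_self _⟩ =
      ((List.range (w.length / b)).map fun j => Sum.inr ((enc α b (blk w d b j)).castSucc))
        ++ (w.drop (w.length / b * b)).map Sum.inl := by
  show dite _ _ _ = _
  erw [dif_neg (by simp)]
  exact rfl

lemma mainSLP_val : (mainSLP w d b hb hw).val = w := by
  rw [SLP.val]
  show (mainSLP w d b hb hw).valAux ⟨Fintype.card (Fin b → α), Nat.lt_succ_self _⟩ = w
  erw [SLP.valAux_eq_s5, mainSLP_rhs_start, List.flatMap_append, List.flatMap_map,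
    flatMap_map_inl]
  have h1 : ((List.range (w.length / b)).flatMap fun j =>
      (Sum.elim (fun a => [a]) (mainSLP w d b hb hw).valAux)
        (Sum.inr ((enc α b (blk w d b j)).castSucc))) =
      (List.range (w.length / b)).flatMap fun j => List.ofFn (blk w d b j) := by
    refine List.flatMap_congr (fun j hj => ?_)
    exact mainSLP_valAux_dict w d b hb hw (blk w d b j)
  erw [h1, blocks_join w d b (w.length / b) (Nat.div_mul_le_self _ _),
    List.take_append_drop]


lemma mainSLP_size :
    (mainSLP w d b hb hw).size =
      Fintype.card (Fin b → α) * b + (w.length / b + (w.length - w.length / b * b)) := by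
  rw [SLP.size]
  show (∑ i : Fin (Fintype.card (Fin b → α) + 1), ((mainSLP w d b hb hw).rhs i).length) = _
  rw [Fin.sum_univ_castSucc]
  congr 1
  · have : ∀ i : Fin (Fintype.card (Fin b → α)),
        ((mainSLP w d b hb hw).rhs i.castSucc).length = b := by
      intro i
      have h : ((i.castSucc : Fin (Fintype.card (Fin b → α) + 1)) : ℕ) <
          Fintype.card (Fin b → α) := by simpa using i.isLt
      show (dite _ _ _ : List _).length = b
      erw [dif_pos h]
      erw [List.length_ofFn]
    rw [Finset.sum_congr rfl (fun i _ => this i)]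
    simp [mul_comm]
  · have : (Fin.last (Fintype.card (Fin b → α))) =
        ⟨Fintype.card (Fin b → α), Nat.lt_succ_self _⟩ := rfl
    erw [this, mainSLP_rhs_start]
    erw [List.length_append, List.length_map, List.length_range, List.length_map, List.length_drop]

end Main


/-- Every word of length `n ≥ 2` over an alphabet of size `σ ≥ 2` has an SLP of size
at most `C · n·log σ / log n` for an absolute constant `C`. -/
theorem slp_n_div_log :
    ∃ C : ℝ, ∀ (α : Type) (inst : Fintype α) (w : List α),
      2 ≤ @Fintype.card α inst → 2 ≤ w.length →
      ∃ G : SLP α, G.val = w ∧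
        (G.size : ℝ) ≤ C * w.length * Real.log (@Fintype.card α inst) / Real.log w.length := by
  use 100
  intro α inst w hσ hn
  letI : Fintype α := inst
  obtain ⟨d⟩ : Nonempty α := Fintype.card_pos_iff.mp (by omega)
  have hw : w ≠ [] := by intro h; rw [h] at hn; simp at hn
  set σ := Fintype.card α with hσdef
  set n := w.length with hndef
  set L := Real.log σ with hLdef
  set Ln := Real.log n with hLndef
  have hl2 : (0:ℝ) < Real.log 2 := Real.log_pos (by norm_num)
  have hL2 : Real.log 2 ≤ L := Real.log_le_log (by norm_num) (by exact_mod_cast hσ)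
  have hLn2 : Real.log 2 ≤ Ln := Real.log_le_log (by norm_num) (by exact_mod_cast hn)
  have hLpos : 0 < L := lt_of_lt_of_le hl2 hL2
  have hLnpos : 0 < Ln := lt_of_lt_of_le hl2 hLn2
  have hNpos : (0:ℝ) < n := by exact_mod_cast (by omega : 0 < n)
  have hN1 : (1:ℝ) ≤ n := by exact_mod_cast (by omega : 1 ≤ n)
  have hσpos : (0:ℝ) < σ := by exact_mod_cast (by omega : 0 < σ)
  have hLhalf : (1/2:ℝ) ≤ L := le_trans (by linarith [Real.log_two_gt_d9]) hL2
  by_cases hc : n < σ^4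
  · refine ⟨trivSLP w hw, trivSLP_val w hw, ?_⟩
    rw [trivSLP_size, le_div_iff₀ hLnpos]
    have h4 : Ln ≤ 4 * L := by
      have h1 : (n:ℝ) ≤ (σ:ℝ)^4 := by exact_mod_cast hc.le
      calc Ln ≤ Real.log ((σ:ℝ)^4) := Real.log_le_log hNpos h1
        _ = 4 * L := by rw [Real.log_pow]; push_cast; ring
    nlinarith [hNpos.le, hLpos.le]
  · push_neg at hc
    set b := ⌊Ln / (4*L)⌋₊ with hbdef
    have hc' : (σ:ℝ)^4 ≤ (n:ℝ) := by exact_mod_cast hc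
    have h4L : 4 * L ≤ Ln := by
      have := Real.log_le_log (by positivity) hc'
      rwa [Real.log_pow, show ((4:ℕ):ℝ) = 4 by norm_num] at this
    have hx1 : (1:ℝ) ≤ Ln / (4*L) := by
      rw [le_div_iff₀ (by positivity)]; linarith
    have hb1 : 1 ≤ b := Nat.le_floor (by exact_mod_cast hx1)
    have hbpos : 0 < b := hb1
    have hbRpos : (0:ℝ) < b := by exact_mod_cast hbpos
    refine ⟨mainSLP w d b hbpos hw, mainSLP_val w d b hbpos hw, ?_⟩
    rw [mainSLP_size w d b hbpos hw]
    set D := Fintype.card (Fin b → α) with hDdef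
    have hDcard : D = σ ^ b := by
      rw [hDdef, Fintype.card_fun, hσdef, Fintype.card_fin]
    set Q := (n:ℝ) ^ ((1:ℝ)/4) with hQdef
    have hQpos : 0 < Q := Real.rpow_pos_of_pos hNpos _
    have hbfl : (b:ℝ) ≤ Ln / (4*L) := Nat.floor_le (by positivity)
    have hbfl' : (b:ℝ) * (4*L) ≤ Ln := by
      rwa [le_div_iff₀ (by positivity)] at hbfl
    have hbL : (b:ℝ) * L ≤ Ln / 4 := by linarith
    have hD : (D:ℝ) ≤ Q := by
      have h1 : (D:ℝ) = (σ:ℝ) ^ (b:ℕ) := by rw [hDcard]; push_cast; ring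
      have h2 : (σ:ℝ) ^ (b:ℕ) = Real.exp (L * b) := by
        conv_lhs => rw [← Real.exp_log hσpos]
        rw [← Real.exp_nat_mul, mul_comm]
      have h3 : Q = Real.exp (Ln * (1/4)) := by
        rw [hQdef, Real.rpow_def_of_pos hNpos]
      rw [h1, h2, h3, Real.exp_le_exp]
      nlinarith
    have hQ2 : Q * Q ≤ (n:ℝ) := by
      have : Q * Q = (n:ℝ) ^ ((1:ℝ)/4 + 1/4) := by
        rw [Real.rpow_add hNpos]
      rw [this]
      calc (n:ℝ) ^ ((1:ℝ)/4 + 1/4) ≤ (n:ℝ) ^ (1:ℝ) :=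
            Real.rpow_le_rpow_of_exponent_le hN1 (by norm_num)
        _ = n := Real.rpow_one _
    have hQ3 : Q * Q * Q ≤ (n:ℝ) := by
      have : Q * Q * Q = (n:ℝ) ^ ((1:ℝ)/4 + 1/4 + 1/4) := by
        rw [Real.rpow_add hNpos, Real.rpow_add hNpos]
      rw [this]
      calc (n:ℝ) ^ ((1:ℝ)/4 + 1/4 + 1/4) ≤ (n:ℝ) ^ (1:ℝ) :=
            Real.rpow_le_rpow_of_exponent_le hN1 (by norm_num)
        _ = n := Real.rpow_one _
    have hLnQ : Ln ≤ 4 * Q := by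
      have h1 := Real.log_le_sub_one_of_pos hQpos
      have h2 : Real.log Q = Ln / 4 := by
        rw [hQdef, Real.log_rpow hNpos]; ring
      linarith
    have hbLn : (b:ℝ) ≤ Ln := by
      have h5 := mul_le_mul_of_nonneg_left (show (1:ℝ) ≤ 4*L by linarith)
        (by positivity : (0:ℝ) ≤ (b:ℝ))
      linarith
    have hbge' : Ln ≤ 8 * L * b := by
      rcases le_or_gt (Ln / (4*L)) 2 with h | h
      · rw [div_le_iff₀ (by positivity)] at h
        have hbR1 : (1:ℝ) ≤ b := by exact_mod_cast hb1
        have h5 := mul_le_mul_of_nonneg_left hbR1 (show (0:ℝ) ≤ 8*L by positivity)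
        linarith
      · have h2 := Nat.sub_one_lt_floor (Ln / (4*L))
        rw [← hbdef] at h2
        have h3 : Ln / (4*L) ≤ (b:ℝ) + 1 := by linarith
        rw [div_le_iff₀ (by positivity)] at h3
        have hbR1 : (1:ℝ) ≤ b := by exact_mod_cast hb1
        have h5 := mul_le_mul_of_nonneg_left hbR1 (show (0:ℝ) ≤ 4*L by positivity)
        linarith
    set k := n / b with hkdef
    have hkbn : k * b ≤ n := Nat.div_mul_le_self n b
    have hkbnR : (k:ℝ) * b ≤ (n:ℝ) := by exact_mod_cast hkbn
    have hrb : n - k * b < b := by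
      have h1 := Nat.mod_add_div n b
      have h2 := Nat.mod_lt n hbpos
      have h3 : k * b = b * (n / b) := by rw [hkdef, Nat.mul_comm]
      omega
    have hrbR : ((n - k * b : ℕ):ℝ) ≤ (b:ℝ) := by exact_mod_cast hrb.le
    rw [le_div_iff₀ hLnpos]
    have hcast : ((D * b + (k + (n - k * b)) : ℕ) : ℝ) =
        (D:ℝ) * b + (k:ℝ) + ((n - k * b : ℕ):ℝ) := by push_cast; ring
    rw [hcast]
    have hnL : (n:ℝ) * 1 ≤ (n:ℝ) * (2*L) := by
      apply mul_le_mul_of_nonneg_left _ hNpos.le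
      linarith
    have e3 : Ln * Ln ≤ 16 * (Q * Q) := by
      have := mul_le_mul hLnQ hLnQ hLnpos.le (by positivity : (0:ℝ) ≤ 4*Q)
      linarith
    have t1 : (D:ℝ) * b * Ln ≤ 32 * n * L := by
      have e1 : (D:ℝ) * b ≤ Q * Ln :=
        mul_le_mul hD hbLn (by positivity) hQpos.le
      have e2 : (D:ℝ) * b * Ln ≤ Q * Ln * Ln :=
        mul_le_mul_of_nonneg_right e1 hLnpos.le
      have e4 : Q * (Ln * Ln) ≤ Q * (16 * (Q * Q)) :=
        mul_le_mul_of_nonneg_left e3 hQpos.le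
      linarith [e2, e4, hQ3, hnL]
    have t2 : (k:ℝ) * Ln ≤ 8 * n * L := by
      have e1 : (k:ℝ) * Ln ≤ (k:ℝ) * (8 * L * b) :=
        mul_le_mul_of_nonneg_left hbge' (by positivity)
      have e2 : 8 * L * ((k:ℝ) * b) ≤ 8 * L * n :=
        mul_le_mul_of_nonneg_left hkbnR (by positivity)
      linarith
    have t3 : ((n - k * b : ℕ):ℝ) * Ln ≤ 32 * n * L := by
      have e1 : ((n - k * b : ℕ):ℝ) * Ln ≤ Ln * Ln :=
        mul_le_mul_of_nonneg_right (le_trans hrbR hbLn) hLnpos.le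
      linarith [e1, e3, hQ2, hnL]
    have hnLpos : (0:ℝ) ≤ (n:ℝ) * L := by positivity
    linarith [t1, t2, t3, hnLpos]
end

section
/- Every word w over an alphabet of size k such that no length-2 factor of w occurs 3 times without overlap and no length-3 factor of w occurs twice without overlap satisfies |w| ≤ 2k² + 2k + 1. -/
/-- `OccursWithoutOverlap v w m` : `v` has (at least) `m` pairwise
non-overlapping occurrences in `w`, witnessed by a decomposition
`w = g₀ v g₁ v ⋯ v gₘ`. -/
def OccursWithoutOverlap {α : Type} (v w : List α) (m : ℕ) : Prop :=
  ∃ gs : List (List α), gs.length = m + 1 ∧ w = List.intercalate v gs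


lemma intercalate_four {α : Type} (v g0 g1 g2 g3 : List α) :
    List.intercalate v [g0,g1,g2,g3] = g0 ++ (v ++ (g1 ++ (v ++ (g2 ++ (v ++ g3))))) := by
  simp [List.intercalate]

lemma occurs_three {α : Type} (w v : List α) (i1 i2 i3 : ℕ)
    (h12 : i1 + 2 ≤ i2) (h23 : i2 + 2 ≤ i3)
    (H1 : w.drop i1 = v ++ w.drop (i1+2))
    (H2 : w.drop i2 = v ++ w.drop (i2+2))
    (H3 : w.drop i3 = v ++ w.drop (i3+2)) :
    OccursWithoutOverlap v w 3 := by
  refine ⟨[w.take i1, (w.drop (i1+2)).take (i2-(i1+2)), (w.drop (i2+2)).take (i3-(i2+2)),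
    w.drop (i3+2)], rfl, ?_⟩
  have d1 : w.drop (i1+2) = (w.drop (i1+2)).take (i2-(i1+2)) ++ w.drop i2 := by
    conv_lhs => rw [← List.take_append_drop (i2-(i1+2)) (w.drop (i1+2))]
    rw [List.drop_drop]
    congr 2
    omega
  have d2 : w.drop (i2+2) = (w.drop (i2+2)).take (i3-(i2+2)) ++ w.drop i3 := by
    conv_lhs => rw [← List.take_append_drop (i3-(i2+2)) (w.drop (i2+2))]
    rw [List.drop_drop]
    congr 2
    omega
  rw [intercalate_four]
  conv_lhs => rw [← List.take_append_drop i1 w, H1, d1, H2, d2, H3]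

lemma no_triple_struct (S : Finset ℕ) (hS : S.Nonempty)
    (h : ∀ i ∈ S, ∀ j ∈ S, ∀ l ∈ S, i + 2 ≤ j → j + 2 ≤ l → False) :
    ∃ m ∈ S, ∃ m' ∈ S, S ⊆ {m, m+1, m', m'+1} := by
  classical
  refine ⟨S.min' hS, S.min'_mem hS, ?_⟩
  by_cases h' : (S.filter fun s => S.min' hS + 2 ≤ s).Nonempty
  · set T := S.filter fun s => S.min' hS + 2 ≤ s with hT
    have hmem : T.min' h' ∈ S ∧ S.min' hS + 2 ≤ T.min' h' :=
      Finset.mem_filter.mp (T.min'_mem h')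
    refine ⟨T.min' h', hmem.1, fun s hs => ?_⟩
    simp only [Finset.mem_insert, Finset.mem_singleton]
    by_cases hs2 : S.min' hS + 2 ≤ s
    · have hle : T.min' h' ≤ s := T.min'_le s (by rw [hT, Finset.mem_filter]; exact ⟨hs, hs2⟩)
      by_cases hs3 : T.min' h' + 2 ≤ s
      · exact (h _ (S.min'_mem hS) _ hmem.1 _ hs hmem.2 hs3).elim
      · omega
    · have := S.min'_le s hs
      omega
  · refine ⟨S.min' hS, S.min'_mem hS, fun s hs => ?_⟩
    have h1 : ¬ (S.min' hS + 2 ≤ s) := fun hh =>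
      h' ⟨s, by rw [Finset.mem_filter]; exact ⟨hs, hh⟩⟩
    have hle := S.min'_le s hs
    simp only [Finset.mem_insert, Finset.mem_singleton]
    omega

lemma card_le_four (S : Finset ℕ)
    (h : ∀ i ∈ S, ∀ j ∈ S, ∀ l ∈ S, i + 2 ≤ j → j + 2 ≤ l → False) :
    S.card ≤ 4 := by
  rcases S.eq_empty_or_nonempty with rfl | hS
  · simp
  obtain ⟨m, _, m', _, hsub⟩ := no_triple_struct S hS h
  have h0 := Finset.card_le_card hsub
  have h1 := Finset.card_insert_le m ({m+1, m', m'+1} : Finset ℕ)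
  have h2 := Finset.card_insert_le (m+1) ({m', m'+1} : Finset ℕ)
  have h3 := Finset.card_insert_le m' ({m'+1} : Finset ℕ)
  have h4 : ({m'+1} : Finset ℕ).card = 1 := Finset.card_singleton _
  omega

lemma card_le_two (S : Finset ℕ)
    (h : ∀ i ∈ S, ∀ j ∈ S, ∀ l ∈ S, i + 2 ≤ j → j + 2 ≤ l → False)
    (hnc : ∀ i ∈ S, i + 1 ∉ S) :
    S.card ≤ 2 := by
  rcases S.eq_empty_or_nonempty with rfl | hS
  · simp
  obtain ⟨m, hm, m', hm', hsub⟩ := no_triple_struct S hS h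
  have hsub2 : S ⊆ ({m, m'} : Finset ℕ) := by
    intro s hs
    have hx := hsub hs
    simp only [Finset.mem_insert, Finset.mem_singleton] at hx ⊢
    rcases hx with rfl|rfl|rfl|rfl
    · exact Or.inl rfl
    · exact absurd hs (hnc m hm)
    · exact Or.inr rfl
    · exact absurd hs (hnc m' hm')
  have h0 := Finset.card_le_card hsub2
  have h1 := Finset.card_insert_le m ({m'} : Finset ℕ)
  have h2 : ({m'} : Finset ℕ).card = 1 := Finset.card_singleton _
  omega

/-- A word over a `k`-letter alphabet in which no length-2 factor occurs 3 times
without overlap and no length-3 factor occurs twice without overlap has length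
at most `2k² + 2k + 1`. -/
theorem incompressible_length_bound {α : Type} (inst : Fintype α) (k : ℕ)
    (hcard : @Fintype.card α inst = k) (w : List α)
    (h2 : ¬ ∃ v : List α, v.length = 2 ∧ OccursWithoutOverlap v w 3)
    (h3 : ¬ ∃ v : List α, v.length = 3 ∧ OccursWithoutOverlap v w 2) :
    w.length ≤ 2 * k ^ 2 + 2 * k + 1 := by
  classical
  by_cases hw : w = []
  · subst hw; simp
  set n := w.length with hn
  set a0 := w.head hw with ha0
  set f : ℕ → α × α := fun i => (w.getD i a0, w.getD (i+1) a0) with hf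
  set fiber : α × α → Finset ℕ :=
    fun p => (Finset.range (n - 1)).filter (fun i => f i = p) with hfiber
  have hdrop : ∀ i, i + 1 < n → w.drop i = w.getD i a0 :: w.getD (i+1) a0 :: w.drop (i+2) := by
    intro i hi
    have hi0 : i < w.length := by omega
    have hi1 : i + 1 < w.length := hi
    rw [List.getD_eq_getElem w a0 hi0, List.getD_eq_getElem w a0 hi1,
        List.drop_eq_getElem_cons hi0, List.drop_eq_getElem_cons hi1]
  have fiber_eq : ∀ a b : α, ∀ i ∈ fiber (a, b), w.drop i = [a, b] ++ w.drop (i+2) := by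
    intro a b i hi
    rw [hfiber] at hi
    simp only [Finset.mem_filter, Finset.mem_range, hf, Prod.mk.injEq] at hi
    obtain ⟨hi1, hia, hib⟩ := hi
    rw [hdrop i (by omega), hia, hib]
    rfl
  have no_triple : ∀ a b : α, ∀ i ∈ fiber (a, b), ∀ j ∈ fiber (a, b), ∀ l ∈ fiber (a, b),
      i + 2 ≤ j → j + 2 ≤ l → False := by
    intro a b i hi j hj l hl hij hjl
    exact h2 ⟨[a, b], rfl, occurs_three w [a, b] i j l hij hjl
      (fiber_eq a b i hi) (fiber_eq a b j hj) (fiber_eq a b l hl)⟩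
  have bound : ∀ p : α × α, (fiber p).card ≤ if p.1 = p.2 then 4 else 2 := by
    rintro ⟨a, b⟩
    by_cases hab : a = b
    · simp only [hab, if_pos rfl]
      exact card_le_four _ (no_triple b b)
    · simp only [if_neg hab]
      refine card_le_two _ (no_triple a b) ?_
      intro i hi hcontra
      apply hab
      rw [hfiber] at hi hcontra
      simp only [Finset.mem_filter, hf, Prod.mk.injEq] at hi hcontra
      rw [← hcontra.2.1, hi.2.2]
  have count : n - 1 = ∑ p : α × α, (fiber p).card := by
    have := Finset.card_eq_sum_card_fiberwise
      (s := Finset.range (n - 1)) (t := (Finset.univ : Finset (α × α))) (f := f)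
      (fun x _ => Finset.mem_univ (f x))
    simpa [Finset.card_range] using this
  have hsum : (∑ p : α × α, (if p.1 = p.2 then (4:ℕ) else 2)) = 2 * k ^ 2 + 2 * k := by
    rw [Fintype.sum_prod_type]
    have inner : ∀ a : α, (∑ b : α, if a = b then (4:ℕ) else 2) = 2 * k + 2 := by
      intro a
      have hsplit : ∀ b : α, (if a = b then (4:ℕ) else 2) = (if a = b then 2 else 0) + 2 := by
        intro b; by_cases h : a = b <;> simp [h]
      rw [Finset.sum_congr rfl (fun b _ => hsplit b), Finset.sum_add_distrib,
          Finset.sum_ite_eq, Finset.sum_const, Finset.card_univ, hcard]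
      simp [if_pos (Finset.mem_univ a)]
      omega
    rw [Finset.sum_congr rfl (fun a _ => inner a), Finset.sum_const, Finset.card_univ, hcard,
        smul_eq_mul]
    ring
  have hle : n - 1 ≤ 2 * k ^ 2 + 2 * k := by
    rw [count, ← hsum]
    exact Finset.sum_le_sum (fun p _ => bound p)
  omega
end

section
/- For every k ≥ 1 there exists a word w over an alphabet of size k with |w| = 2k² + 2k + 1 such that no length-2 factor of w occurs 3 times without overlap and no length-3 factor of w occurs twice without overlap. Concretely, w = (∏_{i=1}^{k} a_{k-i+1}^5) · ∏_{i=1}^{k-1} ((∏_{j=i+2}^{k} (a_j a_i)²) a_{i+1} a_i a_{i+1}) over the alphabet {a_1,…,a_k} has this property. -/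
/-- The concrete word `w_k` over the alphabet `{1,…,k}` (letter `a_i` is `i : ℕ`):
`w_k = (∏_{i=1}^{k} a_{k-i+1}^5) · ∏_{i=1}^{k-1} ((∏_{j=i+2}^{k} (a_j a_i)²) a_{i+1} a_i a_{i+1})`. -/
def wk (k : ℕ) : List ℕ :=
  ((List.range k).map (fun i => List.replicate 5 (k - i))).flatten ++
  ((List.range (k - 1)).map (fun i' =>
      let i := i' + 1
      (((List.range (k - (i + 1))).map (fun j' =>
          let j := j' + i + 2
          [j, i, j, i])).flatten) ++ [i + 1, i, i + 1])).flatten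

namespace IW

def rep5 (m : ℕ) : List ℕ := List.replicate 5 m
def subc (i j : ℕ) : List ℕ := [j, i, j, i]
def tailc (i : ℕ) : List ℕ := [i+1, i, i+1]

def blockC (k i : ℕ) : List (List ℕ) :=
  ((List.range (k - (i+1))).map fun j' => subc i (j' + i + 2)) ++ [tailc i]

def chunks (k : ℕ) : List (List ℕ) :=
  ((List.range k).map fun i => rep5 (k - i)) ++
  (((List.range (k-1)).map fun i' => blockC k (i'+1)).flatten)

theorem wk_eq (k : ℕ) : wk k = (chunks k).flatten := by
  simp only [wk, chunks, List.flatten_append, List.flatten_flatten, List.map_map]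
  refine congrArg₂ _ rfl (congrArg _ (List.map_congr_left fun i' _ => ?_))
  simp [Function.comp, blockC, subc, tailc]


theorem sum_shift (f : ℕ → ℕ) : ∀ l : List ℕ,
    (l.map (fun i => f i + 4)).sum = (l.map f).sum + 4 * l.length := by
  intro l
  induction l with
  | nil => simp
  | cons a l ihl => simp [List.sum_cons, ihl]; ring

theorem sum_aux : ∀ n : ℕ, (((List.range n).map (fun i => 4*(n - 1 - i) + 3)).sum) = 2*n*n + n := by
  intro n
  induction n with
  | zero => simp
  | succ n ih =>
    rw [List.range_succ, List.map_append, List.sum_append]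
    have h1 : ((List.range n).map (fun i => 4*(n + 1 - 1 - i) + 3)).sum
        = ((List.range n).map (fun i => (4*(n - 1 - i) + 3) + 4)).sum := by
      refine congrArg _ (List.map_congr_left fun i hi => ?_)
      simp only [List.mem_range] at hi
      omega
    rw [h1, sum_shift (fun i => 4*(n - 1 - i) + 3), ih, List.length_range]
    simp
    ring_nf

theorem sum_map_const {α : Type} (c : ℕ) (f : α → ℕ) : ∀ (l : List α), (∀ a ∈ l, f a = c) → (l.map f).sum = l.length * c := by
  intro l
  induction l with
  | nil => simp
  | cons a l ihl =>
    intro h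
    simp only [List.map_cons, List.sum_cons, List.length_cons, ihl (fun a ha => h a (List.mem_cons_of_mem _ ha)), h a List.mem_cons_self]
    ring

theorem len_chunks (k : ℕ) (hk : 1 ≤ k) :
    (chunks k).flatten.length = 2 * k ^ 2 + 2 * k + 1 := by
  have hA : (((List.range k).map fun i => rep5 (k - i)).flatten).length = 5 * k := by
    simp only [rep5, List.length_flatten, List.map_map]
    rw [sum_map_const 5 _ _ (fun a _ => by simp)]
    simp [Nat.mul_comm]
  have hB : ((((List.range (k-1)).map fun i' => blockC k (i'+1)).flatten).flatten).length
      = 2*(k-1)*(k-1) + (k-1) := by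
    rw [List.flatten_flatten, List.length_flatten, List.map_map, List.map_map]
    have h1 : ((List.range (k-1)).map ((List.length ∘ List.flatten) ∘ fun i' => blockC k (i'+1)))
        = ((List.range (k-1)).map (fun i' => 4*((k-1) - 1 - i') + 3)) := by
      refine List.map_congr_left fun i hi => ?_
      simp only [List.mem_range] at hi
      simp only [Function.comp, blockC, subc, tailc, List.flatten_append, List.length_append,
        List.length_flatten, List.map_map]
      rw [sum_map_const 4 _ _ (fun a _ => by simp)]
      simp [List.length_range]
      omega
    rw [h1, sum_aux]
  rw [chunks, List.flatten_append, List.length_append, hA, hB]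
  obtain ⟨m, rfl⟩ := Nat.exists_eq_add_of_le hk
  simp only [Nat.add_sub_cancel_left]
  ring


inductive Sh (k : ℕ) : List ℕ → Prop
  | F {m} : 1 ≤ m → m ≤ k → Sh k (rep5 m)
  | S {i j} : 1 ≤ i → i + 2 ≤ j → j ≤ k → Sh k (subc i j)
  | T {i} : 1 ≤ i → i + 1 ≤ k → Sh k (tailc i)

theorem sh_of_mem {k : ℕ} {c : List ℕ} (hc : c ∈ chunks k) : Sh k c := by
  simp only [chunks, List.mem_append, List.mem_map, List.mem_flatten, List.mem_range] at hc
  rcases hc with ⟨i, hi, rfl⟩ | ⟨l, ⟨⟨i', hi', rfl⟩, hcl⟩⟩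
  · exact Sh.F (by omega) (by omega)
  · simp only [blockC, List.mem_append, List.mem_map, List.mem_range,
      List.mem_singleton] at hcl
    rcases hcl with ⟨j', hj', rfl⟩ | rfl
    · exact Sh.S (by omega) (by omega) (by omega)
    · exact Sh.T (by omega) (by omega)

theorem mem_bounds {k : ℕ} {x : ℕ} (hx : x ∈ (chunks k).flatten) : 1 ≤ x ∧ x ≤ k := by
  rw [List.mem_flatten] at hx
  obtain ⟨c, hc, hxc⟩ := hx
  rcases sh_of_mem hc with (⟨h1, h2⟩ | ⟨h1, h2, h3⟩ | ⟨h1, h2⟩) <;>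
    simp [rep5, subc, tailc] at hxc <;> omega


inductive Adj (k : ℕ) : List ℕ → List ℕ → Prop
  | FF {m} : 1 ≤ m → m + 1 ≤ k → Adj k (rep5 (m+1)) (rep5 m)
  | FS : 3 ≤ k → Adj k (rep5 1) (subc 1 3)
  | FT : k = 2 → Adj k (rep5 1) (tailc 1)
  | SS {i j} : 1 ≤ i → i + 2 ≤ j → j + 1 ≤ k → Adj k (subc i j) (subc i (j+1))
  | ST {i} : 1 ≤ i → i + 2 ≤ k → Adj k (subc i k) (tailc i)
  | TS {i} : 1 ≤ i → i + 3 ≤ k → Adj k (tailc i) (subc (i+1) (i+3))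
  | TT {i} : 1 ≤ i → i + 2 = k → Adj k (tailc i) (tailc (i+1))

theorem getLast?_map_range {α : Type} (g : ℕ → α) (n : ℕ) (hn : 0 < n) :
    ((List.range n).map g).getLast? = some (g (n-1)) := by
  obtain ⟨n', rfl⟩ := Nat.exists_eq_add_of_lt hn
  rw [Nat.zero_add, List.range_succ, List.map_append]
  simp [List.getLast?_concat]

theorem head?_map_range {α : Type} (g : ℕ → α) (n : ℕ) (hn : 0 < n) :
    ((List.range n).map g).head? = some (g 0) := by
  obtain ⟨n', rfl⟩ := Nat.exists_eq_add_of_lt hn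
  rw [Nat.zero_add, List.range_succ_eq_map]
  simp

theorem head?_blockC (k i : ℕ) (h : i + 1 ≤ k) :
    (blockC k i).head? = some (if i + 2 ≤ k then subc i (i+2) else tailc i) := by
  by_cases h2 : i + 2 ≤ k
  · rw [blockC, List.head?_append, head?_map_range _ _ (by omega)]
    simp [h2]
  · have : k - (i+1) = 0 := by omega
    rw [blockC, this]
    simp [h2]

theorem getLast?_blockC (k i : ℕ) : (blockC k i).getLast? = some (tailc i) :=
  List.getLast?_concat

theorem chain_chunks (k : ℕ) (hk : 1 ≤ k) : List.Chain' (Adj k) (chunks k) := by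
  simp only [List.Chain']
  rw [chunks, List.isChain_append]
  refine ⟨?_, ?_, ?_⟩
  · -- chain within the first part
    rw [List.isChain_map]
    obtain ⟨n, hn⟩ : ∃ n, k = n + 1 := ⟨k - 1, by omega⟩
    rw [hn, List.isChain_range_succ]
    intro m hm
    have h1 : n + 1 - m = (n + 1 - (m+1)) + 1 := by omega
    rw [h1, ← hn]
    exact Adj.FF (by omega) (by omega)
  · -- chain within the second part
    rw [List.isChain_flatten (by
      intro h
      rw [List.mem_map] at h
      obtain ⟨i', _, h⟩ := h
      exact absurd h.symm (by simp [blockC]))]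
    constructor
    · -- chain within each block
      rintro l hl
      rw [List.mem_map] at hl
      obtain ⟨i', hi', rfl⟩ := hl
      rw [List.mem_range] at hi'
      rw [blockC, List.isChain_append]
      refine ⟨?_, by simp, ?_⟩
      · rw [List.isChain_map]
        rcases Nat.eq_zero_or_pos (k - (i'+1+1)) with h0 | h0
        · rw [h0]; simp
        · obtain ⟨n, hn⟩ : ∃ n, k - (i'+1+1) = n + 1 := ⟨k - (i'+1+1) - 1, by omega⟩
          rw [hn, List.isChain_range_succ]
          intro m hm
          have h1 : m + 1 + (i'+1) + 2 = (m + (i'+1) + 2) + 1 := by omega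
          rw [h1]
          exact Adj.SS (by omega) (by omega) (by omega)
      · rcases Nat.eq_zero_or_pos (k - (i'+1+1)) with h0 | h0
        · rw [h0]; simp
        · intro x hx y hy
          rw [getLast?_map_range _ _ h0] at hx
          rw [List.head?_cons] at hy
          rw [Option.mem_some_iff] at hx hy
          subst hx; subst hy
          have h1 : k - (i'+1+1) - 1 + (i'+1) + 2 = k := by omega
          rw [h1]
          exact Adj.ST (by omega) (by omega)
    · -- chain between blocks
      rw [List.isChain_map]
      rcases Nat.lt_or_ge k 2 with h2 | h2
      · have h1 : k - 1 = 0 := by omega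
        rw [h1]; simp
      · obtain ⟨n, hn⟩ : ∃ n, k - 1 = n + 1 := ⟨k - 2, by omega⟩
        rw [hn, List.isChain_range_succ]
        intro m hm
        intro x hx y hy
        rw [getLast?_blockC] at hx
        rw [head?_blockC _ _ (by omega)] at hy
        rw [Option.mem_some_iff] at hx hy
        subst hx; subst hy
        simp only [Nat.succ_eq_add_one]
        by_cases h3 : m + 1 + 1 + 2 ≤ k
        · rw [if_pos h3]
          exact Adj.TS (by omega) (by omega)
        · rw [if_neg h3]
          exact Adj.TT (by omega) (by omega)
  · -- junction between the two parts
    intro x hx y hy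
    rw [getLast?_map_range _ _ (by omega)] at hx
    rw [Option.mem_some_iff] at hx
    subst hx
    rcases Nat.lt_or_ge k 2 with h2 | h2
    · have h1 : k - 1 = 0 := by omega
      rw [h1] at hy
      simp at hy
    · rw [List.head?_flatten] at hy
      obtain ⟨n, hn⟩ : ∃ n, k - 1 = n + 1 := ⟨k - 2, by omega⟩
      rw [hn, List.range_succ_eq_map, List.map_cons, List.findSome?_cons] at hy
      rw [head?_blockC _ _ (by omega)] at hy
      simp only [Option.mem_some_iff] at hy
      have h1 : k - (k - 1) = 1 := by omega
      rw [h1]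
      by_cases h3 : 0 + 1 + 2 ≤ k
      · rw [if_pos h3] at hy
        subst hy
        exact Adj.FS (by omega)
      · rw [if_neg h3] at hy
        subst hy
        exact Adj.FT (by omega)


def key (c : List ℕ) : ℕ × ℕ × ℕ := (c.length, c.getD 1 0, c.getD 0 0)

@[simp] theorem key_subc (i j : ℕ) : key (subc i j) = (4, i, j) := rfl
@[simp] theorem key_tailc (i : ℕ) : key (tailc i) = (3, i, i+1) := rfl
@[simp] theorem key_rep5 (m : ℕ) : key (rep5 m) = (5, m, m) := rfl

theorem nodup_chunks (k : ℕ) : (chunks k).Nodup := by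
  have hmap : ((chunks k).map key).Nodup → (chunks k).Nodup := List.Nodup.of_map key
  apply hmap
  rw [chunks, List.map_append, List.nodup_append]
  refine ⟨?_, ?_, ?_⟩
  · rw [List.map_map]
    refine List.Nodup.map_on ?_ List.nodup_range
    intro x hx y hy hxy
    simp only [List.mem_range] at hx hy
    simp only [Function.comp, key_rep5, Prod.mk.injEq] at hxy
    omega
  · rw [List.map_flatten, List.map_map, List.nodup_flatten]
    constructor
    · intro l hl
      rw [List.mem_map] at hl
      obtain ⟨i', hi', rfl⟩ := hl
      simp only [Function.comp, blockC, List.map_append, List.map_map]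
      rw [List.nodup_append]
      refine ⟨?_, by simp, ?_⟩
      · refine List.Nodup.map_on ?_ List.nodup_range
        intro x hx y hy hxy
        simp only [Function.comp, key_subc, Prod.mk.injEq] at hxy
        omega
      · intro x hx
        simp only [List.mem_map, List.mem_range] at hx
        obtain ⟨j', hj', rfl⟩ := hx
        simp
    · rw [List.pairwise_map]
      have hpl : (List.range (k-1)).Pairwise (· < ·) := List.pairwise_lt_range
      refine hpl.imp ?_
      intro a b hab x hxa hxb
      simp only [Function.comp, blockC, List.map_append, List.map_map, List.mem_append,
        List.mem_map, List.mem_range, List.mem_singleton] at hxa hxb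
      have h2a : x.2.1 = a + 1 := by
        rcases hxa with ⟨j', _, rfl⟩ | ⟨_, rfl, rfl⟩ <;> simp
      have h2b : x.2.1 = b + 1 := by
        rcases hxb with ⟨j', _, rfl⟩ | ⟨_, rfl, rfl⟩ <;> simp
      omega
  · intro x hx y hx2 hxy
    subst hxy
    simp only [List.map_map, List.mem_map, List.mem_range] at hx
    obtain ⟨i, hi, rfl⟩ := hx
    rw [List.map_flatten, List.map_map, List.mem_flatten] at hx2
    obtain ⟨l, hl, hxl⟩ := hx2
    rw [List.mem_map] at hl
    obtain ⟨i', hi', rfl⟩ := hl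
    simp only [Function.comp, blockC, List.map_append, List.map_map, List.mem_append,
      List.mem_map, List.mem_range, List.mem_singleton] at hxl
    have h1 : (key (rep5 (k - i))).1 = 5 := by simp
    rcases hxl with ⟨j', _, hx⟩ | ⟨_, rfl, hx⟩ <;> rw [← hx] at h1 <;> simp at h1


def preS (L : List (List ℕ)) (t : ℕ) : ℕ := ((L.take t).map List.length).sum

theorem preS_succ (L : List (List ℕ)) (t : ℕ) (ht : t < L.length) :
    preS L (t+1) = preS L t + (L.getD t []).length := by
  rw [preS, preS, List.take_succ, List.map_append, List.sum_append,
    List.getElem?_eq_getElem ht, List.getD_eq_getElem _ _ ht]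
  simp

theorem preS_cons (c : List ℕ) (L : List (List ℕ)) (t : ℕ) :
    preS (c :: L) (t+1) = c.length + preS L t := by
  rw [preS, preS, List.take_succ_cons]
  simp

theorem occ_decomp : ∀ (L : List (List ℕ)), (∀ c ∈ L, 3 ≤ c.length) →
    ∀ (v : List ℕ) (p : ℕ), 1 ≤ v.length → v.length ≤ 3 →
    p + v.length ≤ L.flatten.length → v = (L.flatten.drop p).take v.length →
    ∃ t o, t < L.length ∧ o < (L.getD t []).length ∧ p = preS L t + o ∧
      ((o + v.length ≤ (L.getD t []).length ∧ v = ((L.getD t []).drop o).take v.length)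
       ∨ (t + 1 < L.length ∧ (L.getD t []).length < o + v.length ∧
          v = (L.getD t []).drop o ++ ((L.getD (t+1) []).take (o + v.length - (L.getD t []).length)))) := by
  intro L
  induction L with
  | nil =>
    intro _ v p h1 _ hle _
    simp only [List.flatten_nil, List.length_nil] at hle
    omega
  | cons c rest ih =>
    intro hlen v p h1 h3 hle hv
    rw [List.flatten_cons] at hle hv
    rw [List.length_append] at hle
    by_cases hp : p < c.length
    · refine ⟨0, p, by simp, by simpa using hp, by simp [preS], ?_⟩
      rw [List.drop_append, List.take_append] at hv
      by_cases hin : p + v.length ≤ c.length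
      · left
        refine ⟨by simpa using hin, ?_⟩
        have hz : v.length - (c.drop p).length = 0 := by
          rw [List.length_drop]; omega
        rw [hz, List.take_zero, List.append_nil] at hv
        simpa using hv
      · right
        have hrest : rest ≠ [] := by
          intro h
          rw [h] at hle
          simp only [List.flatten_nil, List.length_nil] at hle
          omega
        obtain ⟨c', rest', rfl⟩ := List.exists_cons_of_ne_nil hrest
        refine ⟨by simp, by simpa using hin, ?_⟩
        have hdp : (c.drop p).length = c.length - p := List.length_drop ..
        have htk : v.length - (c.drop p).length = p + v.length - c.length := by omega
        rw [List.take_of_length_le (by omega), htk] at hv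
        rw [(show p - c.length = 0 by omega), List.drop_zero] at hv
        have hc' : 3 ≤ c'.length := hlen c' (by simp)
        have hkey : List.take (p + v.length - c.length) ((c'::rest').flatten)
            = List.take (p + v.length - c.length) c' := by
          rw [List.flatten_cons, List.take_append,
            (show p + v.length - c.length - c'.length = 0 by omega), List.take_zero,
            List.append_nil]
        rw [hkey] at hv
        simpa using hv
    · have hp' : p - c.length + v.length ≤ rest.flatten.length := by omega
      have hv' : v = (rest.flatten.drop (p - c.length)).take v.length := by
        rw [List.drop_append] at hv
        rw [List.drop_eq_nil_of_le (by omega : c.length ≤ p)] at hv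
        simpa using hv
      obtain ⟨t, o, ht, ho, hpe, hcase⟩ :=
        ih (fun c hc => hlen c (List.mem_cons_of_mem _ hc)) v (p - c.length) h1 h3 hp' hv'
      refine ⟨t+1, o, by simpa using ht, by simpa using ho, ?_, ?_⟩
      · rw [preS_cons]; omega
      · rcases hcase with h | h
        · left; simpa using h
        · right
          refine ⟨by simpa using h.1, by simpa using h.2.1, ?_⟩
          simpa using h.2.2

theorem getD_mem {k t : ℕ} (ht : t < (chunks k).length) : (chunks k).getD t [] ∈ chunks k := by
  rw [List.getD_eq_getElem _ _ ht]
  exact List.getElem_mem ht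

theorem len3_of_mem {k : ℕ} {c : List ℕ} (hc : c ∈ chunks k) : 3 ≤ c.length := by
  rcases sh_of_mem hc with (_|_|_) <;> simp [rep5, subc, tailc]

theorem adj_getD {k t : ℕ} (hk : 1 ≤ k) (ht : t + 1 < (chunks k).length) :
    Adj k ((chunks k).getD t []) ((chunks k).getD (t+1) []) := by
  have h := chain_chunks k hk
  simp only [List.Chain'] at h
  rw [List.isChain_iff_getElem] at h
  have h2 := h t (by omega)
  rwa [List.getD_eq_getElem _ _ (by omega), List.getD_eq_getElem _ _ ht]

theorem getD_inj {k u u' : ℕ} (hu : u < (chunks k).length) (hu' : u' < (chunks k).length)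
    (he : (chunks k).getD u [] = (chunks k).getD u' []) : u = u' := by
  rw [List.getD_eq_getElem _ _ hu, List.getD_eq_getElem _ _ hu'] at he
  exact (nodup_chunks k).getElem_inj_iff.mp he

def At (k u : ℕ) (c : List ℕ) : Prop := u < (chunks k).length ∧ (chunks k).getD u [] = c

theorem At.inj {k u u' : ℕ} {c : List ℕ} (h : At k u c) (h' : At k u' c) : u = u' :=
  getD_inj h.1 h'.1 (h.2.trans h'.2.symm)

theorem pair_desc {k a b p : ℕ} (hk : 1 ≤ k)
    (hle : p + 2 ≤ (chunks k).flatten.length)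
    (hv : [a,b] = ((chunks k).flatten.drop p).take 2) :
    (a = b ∧ ∃ u, At k u (rep5 a) ∧ preS (chunks k) u ≤ p ∧ p ≤ preS (chunks k) u + 3) ∨
    (b + 2 ≤ a ∧ ∃ u, At k u (subc b a) ∧ (p = preS (chunks k) u ∨ p = preS (chunks k) u + 2)) ∨
    (a + 2 ≤ b ∧ ∃ u, At k u (subc a b) ∧ (p + 1 = preS (chunks k) u ∨ p = preS (chunks k) u + 1)) ∨
    (b + 1 = a ∧ ((∃ u, At k u (rep5 a) ∧ p = preS (chunks k) u + 4) ∨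
                  (∃ u, At k u (tailc b) ∧ p = preS (chunks k) u))) ∨
    (a + 1 = b ∧ ∃ u, At k u (tailc a) ∧ (p + 1 = preS (chunks k) u ∨ p = preS (chunks k) u + 1)) := by
  obtain ⟨t, o, ht, ho, hpe, hcase⟩ := occ_decomp (chunks k) (fun c hc => len3_of_mem hc)
    [a,b] p (by simp) (by simp) (by simpa using hle) hv
  rcases hcase with ⟨hin, hvv⟩ | ⟨ht1, hlt, hvv⟩
  · -- occurrence inside one chunk
    obtain ⟨Ct, hCt⟩ : ∃ c, (chunks k).getD t [] = c := ⟨_, rfl⟩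
    rw [hCt] at ho hin hvv
    have hsh : Sh k Ct := hCt ▸ sh_of_mem (getD_mem ht)
    cases hsh with
    | F h1 h2 =>
      rename_i m
      rw [rep5, List.length_replicate] at ho hin
      simp only [List.length_cons, List.length_nil, Nat.reduceAdd] at hin
      have ho3 : o ≤ 3 := by omega
      interval_cases o <;>
      · simp [rep5, List.replicate_succ] at hvv
        obtain ⟨rfl, rfl⟩ := hvv
        exact Or.inl ⟨rfl, t, ⟨ht, hCt⟩, by omega, by omega⟩
    | S h1 h2 h3 =>
      rename_i i j
      rw [subc] at ho hin hvv
      simp only [List.length_cons, List.length_nil, Nat.reduceAdd] at ho hin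
      interval_cases o
      · simp at hvv
        obtain ⟨rfl, rfl⟩ := hvv
        exact Or.inr (Or.inl ⟨by omega, t, ⟨ht, hCt⟩, Or.inl (by omega)⟩)
      · simp at hvv
        obtain ⟨rfl, rfl⟩ := hvv
        exact Or.inr (Or.inr (Or.inl ⟨by omega, t, ⟨ht, hCt⟩, Or.inr (by omega)⟩))
      · simp at hvv
        obtain ⟨rfl, rfl⟩ := hvv
        exact Or.inr (Or.inl ⟨by omega, t, ⟨ht, hCt⟩, Or.inr (by omega)⟩)
      · exact absurd hin (by omega)
    | T h1 h2 =>
      rename_i i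
      rw [tailc] at ho hin hvv
      simp only [List.length_cons, List.length_nil, Nat.reduceAdd] at ho hin
      interval_cases o
      · simp at hvv
        obtain ⟨rfl, rfl⟩ := hvv
        exact Or.inr (Or.inr (Or.inr (Or.inl ⟨by omega, Or.inr ⟨t, ⟨ht, hCt⟩, by omega⟩⟩)))
      · simp at hvv
        obtain ⟨rfl, rfl⟩ := hvv
        exact Or.inr (Or.inr (Or.inr (Or.inr ⟨by omega, t, ⟨ht, hCt⟩, Or.inr (by omega)⟩)))
      · exact absurd hin (by omega)
  · -- occurrence straddling two chunks
    obtain ⟨Ct, hCt⟩ : ∃ c, (chunks k).getD t [] = c := ⟨_, rfl⟩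
    obtain ⟨Ct1, hCt1⟩ : ∃ c, (chunks k).getD (t+1) [] = c := ⟨_, rfl⟩
    rw [hCt] at ho hlt hvv
    rw [hCt1] at hvv
    have hadj : Adj k Ct Ct1 := hCt ▸ hCt1 ▸ adj_getD hk ht1
    have hS : preS (chunks k) (t+1) = preS (chunks k) t + Ct.length := by
      rw [preS_succ _ _ (by omega), hCt]
    cases hadj with
    | FF h1 h2 =>
      rename_i m
      rw [rep5, List.length_replicate] at ho hlt hS
      simp only [List.length_cons, List.length_nil, Nat.reduceAdd] at hlt
      have ho4 : o = 4 := by omega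
      subst ho4
      simp [rep5, List.replicate_succ] at hvv
      obtain ⟨rfl, rfl⟩ := hvv
      exact Or.inr (Or.inr (Or.inr (Or.inl ⟨rfl, Or.inl ⟨t, ⟨ht, hCt⟩, by omega⟩⟩)))
    | FS h1 =>
      rw [rep5, List.length_replicate] at ho hlt hS
      simp only [List.length_cons, List.length_nil, Nat.reduceAdd] at hlt
      have ho4 : o = 4 := by omega
      subst ho4
      simp [rep5, subc, List.replicate_succ] at hvv
      obtain ⟨rfl, rfl⟩ := hvv
      exact Or.inr (Or.inr (Or.inl ⟨by omega, t+1, ⟨ht1, hCt1⟩, Or.inl (by omega)⟩))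
    | FT h1 =>
      rw [rep5, List.length_replicate] at ho hlt hS
      simp only [List.length_cons, List.length_nil, Nat.reduceAdd] at hlt
      have ho4 : o = 4 := by omega
      subst ho4
      simp [rep5, tailc, List.replicate_succ] at hvv
      obtain ⟨rfl, rfl⟩ := hvv
      exact Or.inr (Or.inr (Or.inr (Or.inr ⟨by omega, t+1, ⟨ht1, hCt1⟩, Or.inl (by omega)⟩)))
    | SS h1 h2 h3 =>
      rename_i i j
      rw [subc] at ho hlt hS
      simp only [List.length_cons, List.length_nil, Nat.reduceAdd] at ho hlt hS
      have ho3 : o = 3 := by omega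
      subst ho3
      simp [subc] at hvv
      obtain ⟨rfl, rfl⟩ := hvv
      exact Or.inr (Or.inr (Or.inl ⟨by omega, t+1, ⟨ht1, hCt1⟩, Or.inl (by omega)⟩))
    | ST h1 h2 =>
      rename_i i
      rw [subc] at ho hlt hS
      simp only [List.length_cons, List.length_nil, Nat.reduceAdd] at ho hlt hS
      have ho3 : o = 3 := by omega
      subst ho3
      simp [subc, tailc] at hvv
      obtain ⟨rfl, rfl⟩ := hvv
      exact Or.inr (Or.inr (Or.inr (Or.inr ⟨by omega, t+1, ⟨ht1, hCt1⟩, Or.inl (by omega)⟩)))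
    | TS h1 h2 =>
      rename_i i
      rw [tailc] at ho hlt hS
      simp only [List.length_cons, List.length_nil, Nat.reduceAdd] at ho hlt hS
      have ho2 : o = 2 := by omega
      subst ho2
      simp [subc, tailc] at hvv
      obtain ⟨rfl, rfl⟩ := hvv
      exact Or.inr (Or.inr (Or.inl ⟨by omega, t+1, ⟨ht1, hCt1⟩, Or.inl (by omega)⟩))
    | TT h1 h2 =>
      rename_i i
      rw [tailc] at ho hlt hS
      simp only [List.length_cons, List.length_nil, Nat.reduceAdd] at ho hlt hS
      have ho2 : o = 2 := by omega
      subst ho2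
      simp [tailc] at hvv
      obtain ⟨rfl, rfl⟩ := hvv
      exact Or.inr (Or.inr (Or.inr (Or.inr ⟨by omega, t+1, ⟨ht1, hCt1⟩, Or.inl (by omega)⟩)))

theorem triple_desc {k a b c p : ℕ} (hk : 1 ≤ k)
    (hle : p + 3 ≤ (chunks k).flatten.length)
    (hv : [a,b,c] = ((chunks k).flatten.drop p).take 3) :
    (a = b ∧ b = c ∧ ∃ u, At k u (rep5 a) ∧ preS (chunks k) u ≤ p ∧ p ≤ preS (chunks k) u + 2) ∨
    (a = b ∧ b ≠ c ∧ ∃ u, At k u (rep5 a) ∧ p = preS (chunks k) u + 3) ∨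
    (a ≠ b ∧ b = c ∧ b + 1 = a ∧ ∃ u, At k u (rep5 a) ∧ p = preS (chunks k) u + 4) ∨
    (a = c ∧ a + 2 ≤ b ∧ ∃ u, At k u (subc a b) ∧ (p + 1 = preS (chunks k) u ∨ p = preS (chunks k) u + 1)) ∨
    (a = c ∧ b = a + 1 ∧ ∃ u, At k u (tailc a) ∧ p + 1 = preS (chunks k) u) ∨
    (a = c ∧ b + 1 = a ∧ ∃ u, At k u (tailc b) ∧ p = preS (chunks k) u) ∨
    (a = c ∧ b + 2 ≤ a ∧ ∃ u, At k u (subc b a) ∧ p = preS (chunks k) u) ∨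
    (a ≠ c ∧ a ≠ b ∧ b ≠ c ∧ b + 2 ≤ a ∧ ∃ u, At k u (subc b a) ∧ p = preS (chunks k) u + 2) ∨
    (a ≠ c ∧ b = a + 1 ∧ ∃ u, At k u (tailc a) ∧ p = preS (chunks k) u + 1) := by
  obtain ⟨t, o, ht, ho, hpe, hcase⟩ := occ_decomp (chunks k) (fun c hc => len3_of_mem hc)
    [a,b,c] p (by simp) (by simp) (by simpa using hle) hv
  rcases hcase with ⟨hin, hvv⟩ | ⟨ht1, hlt, hvv⟩
  · -- occurrence inside one chunk
    obtain ⟨Ct, hCt⟩ : ∃ c, (chunks k).getD t [] = c := ⟨_, rfl⟩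
    rw [hCt] at ho hin hvv
    have hsh : Sh k Ct := hCt ▸ sh_of_mem (getD_mem ht)
    cases hsh with
    | F h1 h2 =>
      rename_i m
      rw [rep5, List.length_replicate] at ho hin
      simp only [List.length_cons, List.length_nil, Nat.reduceAdd] at hin
      have ho2 : o ≤ 2 := by omega
      interval_cases o <;>
      · simp [rep5, List.replicate_succ] at hvv
        obtain ⟨rfl, rfl, rfl⟩ := hvv
        exact Or.inl ⟨rfl, rfl, t, ⟨ht, hCt⟩, by omega, by omega⟩
    | S h1 h2 h3 =>
      rename_i i j
      rw [subc] at ho hin hvv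
      simp only [List.length_cons, List.length_nil, Nat.reduceAdd] at ho hin
      interval_cases o
      · simp at hvv
        obtain ⟨rfl, rfl, rfl⟩ := hvv
        exact Or.inr (Or.inr (Or.inr (Or.inr (Or.inr (Or.inr (Or.inl
          ⟨rfl, by omega, t, ⟨ht, hCt⟩, by omega⟩))))))
      · simp at hvv
        obtain ⟨rfl, rfl, rfl⟩ := hvv
        exact Or.inr (Or.inr (Or.inr (Or.inl ⟨rfl, by omega, t, ⟨ht, hCt⟩, Or.inr (by omega)⟩)))
      · exact absurd hin (by omega)
      · exact absurd hin (by omega)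
    | T h1 h2 =>
      rename_i i
      rw [tailc] at ho hin hvv
      simp only [List.length_cons, List.length_nil, Nat.reduceAdd] at ho hin
      interval_cases o
      · simp at hvv
        obtain ⟨rfl, rfl, rfl⟩ := hvv
        exact Or.inr (Or.inr (Or.inr (Or.inr (Or.inr (Or.inl
          ⟨rfl, rfl, t, ⟨ht, hCt⟩, by omega⟩)))))
      · exact absurd hin (by omega)
      · exact absurd hin (by omega)
  · -- occurrence straddling two chunks
    obtain ⟨Ct, hCt⟩ : ∃ c, (chunks k).getD t [] = c := ⟨_, rfl⟩
    obtain ⟨Ct1, hCt1⟩ : ∃ c, (chunks k).getD (t+1) [] = c := ⟨_, rfl⟩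
    rw [hCt] at ho hlt hvv
    rw [hCt1] at hvv
    have hadj : Adj k Ct Ct1 := hCt ▸ hCt1 ▸ adj_getD hk ht1
    have hS : preS (chunks k) (t+1) = preS (chunks k) t + Ct.length := by
      rw [preS_succ _ _ (by omega), hCt]
    cases hadj with
    | FF h1 h2 =>
      rename_i m
      rw [rep5, List.length_replicate] at ho hlt hS
      simp only [List.length_cons, List.length_nil, Nat.reduceAdd] at hlt
      have hoe : o = 3 ∨ o = 4 := by omega
      rcases hoe with rfl | rfl
      · simp [rep5, List.replicate_succ] at hvv
        obtain ⟨rfl, rfl, rfl⟩ := hvv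
        exact Or.inr (Or.inl ⟨rfl, by omega, t, ⟨ht, hCt⟩, by omega⟩)
      · simp [rep5, List.replicate_succ] at hvv
        obtain ⟨rfl, rfl, rfl⟩ := hvv
        exact Or.inr (Or.inr (Or.inl ⟨by omega, rfl, by omega, t, ⟨ht, hCt⟩, by omega⟩))
    | FS h1 =>
      rw [rep5, List.length_replicate] at ho hlt hS
      simp only [List.length_cons, List.length_nil, Nat.reduceAdd] at hlt
      have hoe : o = 3 ∨ o = 4 := by omega
      rcases hoe with rfl | rfl
      · simp [rep5, subc, List.replicate_succ] at hvv
        obtain ⟨rfl, rfl, rfl⟩ := hvv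
        exact Or.inr (Or.inl ⟨rfl, by omega, t, ⟨ht, hCt⟩, by omega⟩)
      · simp [rep5, subc, List.replicate_succ] at hvv
        obtain ⟨rfl, rfl, rfl⟩ := hvv
        exact Or.inr (Or.inr (Or.inr (Or.inl ⟨rfl, by omega, t+1, ⟨ht1, hCt1⟩, Or.inl (by omega)⟩)))
    | FT h1 =>
      rw [rep5, List.length_replicate] at ho hlt hS
      simp only [List.length_cons, List.length_nil, Nat.reduceAdd] at hlt
      have hoe : o = 3 ∨ o = 4 := by omega
      rcases hoe with rfl | rfl
      · simp [rep5, tailc, List.replicate_succ] at hvv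
        obtain ⟨rfl, rfl, rfl⟩ := hvv
        exact Or.inr (Or.inl ⟨rfl, by omega, t, ⟨ht, hCt⟩, by omega⟩)
      · simp [rep5, tailc, List.replicate_succ] at hvv
        obtain ⟨rfl, rfl, rfl⟩ := hvv
        exact Or.inr (Or.inr (Or.inr (Or.inr (Or.inl ⟨rfl, by omega, t+1, ⟨ht1, hCt1⟩, by omega⟩))))
    | SS h1 h2 h3 =>
      rename_i i j
      rw [subc] at ho hlt hS
      simp only [List.length_cons, List.length_nil, Nat.reduceAdd] at ho hlt hS
      have hoe : o = 2 ∨ o = 3 := by omega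
      rcases hoe with rfl | rfl
      · simp [subc] at hvv
        obtain ⟨rfl, rfl, rfl⟩ := hvv
        exact Or.inr (Or.inr (Or.inr (Or.inr (Or.inr (Or.inr (Or.inr (Or.inl
          ⟨by omega, by omega, by omega, by omega, t, ⟨ht, hCt⟩, by omega⟩)))))))
      · simp [subc] at hvv
        obtain ⟨rfl, rfl, rfl⟩ := hvv
        exact Or.inr (Or.inr (Or.inr (Or.inl ⟨rfl, by omega, t+1, ⟨ht1, hCt1⟩, Or.inl (by omega)⟩)))
    | ST h1 h2 =>
      rename_i i
      rw [subc] at ho hlt hS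
      simp only [List.length_cons, List.length_nil, Nat.reduceAdd] at ho hlt hS
      have hoe : o = 2 ∨ o = 3 := by omega
      rcases hoe with rfl | rfl
      · simp [subc, tailc] at hvv
        obtain ⟨rfl, rfl, rfl⟩ := hvv
        exact Or.inr (Or.inr (Or.inr (Or.inr (Or.inr (Or.inr (Or.inr (Or.inl
          ⟨by omega, by omega, by omega, by omega, t, ⟨ht, hCt⟩, by omega⟩)))))))
      · simp [subc, tailc] at hvv
        obtain ⟨rfl, rfl, rfl⟩ := hvv
        exact Or.inr (Or.inr (Or.inr (Or.inr (Or.inl ⟨rfl, by omega, t+1, ⟨ht1, hCt1⟩, by omega⟩))))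
    | TS h1 h2 =>
      rename_i i
      rw [tailc] at ho hlt hS
      simp only [List.length_cons, List.length_nil, Nat.reduceAdd] at ho hlt hS
      have hoe : o = 1 ∨ o = 2 := by omega
      rcases hoe with rfl | rfl
      · simp [subc, tailc] at hvv
        obtain ⟨rfl, rfl, rfl⟩ := hvv
        exact Or.inr (Or.inr (Or.inr (Or.inr (Or.inr (Or.inr (Or.inr (Or.inr
          ⟨by omega, by omega, t, ⟨ht, hCt⟩, by omega⟩)))))))
      · simp [subc, tailc] at hvv
        obtain ⟨rfl, rfl, rfl⟩ := hvv
        exact Or.inr (Or.inr (Or.inr (Or.inl ⟨rfl, by omega, t+1, ⟨ht1, hCt1⟩, Or.inl (by omega)⟩)))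
    | TT h1 h2 =>
      rename_i i
      rw [tailc] at ho hlt hS
      simp only [List.length_cons, List.length_nil, Nat.reduceAdd] at ho hlt hS
      have hoe : o = 1 ∨ o = 2 := by omega
      rcases hoe with rfl | rfl
      · simp [tailc] at hvv
        obtain ⟨rfl, rfl, rfl⟩ := hvv
        exact Or.inr (Or.inr (Or.inr (Or.inr (Or.inr (Or.inr (Or.inr (Or.inr
          ⟨by omega, by omega, t, ⟨ht, hCt⟩, by omega⟩)))))))
      · simp [tailc] at hvv
        obtain ⟨rfl, rfl, rfl⟩ := hvv
        exact Or.inr (Or.inr (Or.inr (Or.inr (Or.inl ⟨rfl, by omega, t+1, ⟨ht1, hCt1⟩, by omega⟩))))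

theorem occAt_parts {w x v y : List ℕ} (h : w = x ++ (v ++ y)) :
    x.length + v.length ≤ w.length ∧ v = (w.drop x.length).take v.length := by
  subst h
  constructor
  · simp only [List.length_append]
    omega
  · rw [List.drop_left, List.take_left]

theorem no_triple_2 (k : ℕ) (hk : 1 ≤ k) :
    ¬ ∃ v : List ℕ, v.length = 3 ∧ OccursWithoutOverlap v (wk k) 2 := by
  rintro ⟨v, hv3, gs, hgs, hw⟩
  obtain ⟨g0, g1, g2, rfl⟩ := List.length_eq_three.mp hgs
  obtain ⟨a, b, c, rfl⟩ := List.length_eq_three.mp hv3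
  rw [List.intercalate] at hw
  simp only [List.intersperse, List.flatten, List.append_nil] at hw
  rw [wk_eq] at hw
  have e2 : (chunks k).flatten = (g0 ++ ([a,b,c] ++ g1)) ++ ([a,b,c] ++ g2) := by
    rw [hw]; simp [List.append_assoc]
  obtain ⟨hle1, hv1⟩ := occAt_parts hw
  obtain ⟨hle2, hv2⟩ := occAt_parts e2
  have hp2 : (g0 ++ ([a,b,c] ++ g1)).length = g0.length + 3 + g1.length := by
    simp [List.length_append]; omega
  rw [hp2] at hle2 hv2
  simp only [List.length_cons, List.length_nil, Nat.reduceAdd] at hle1 hle2 hv1 hv2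
  have hd1 := triple_desc hk (by omega) hv1
  have hd2 := triple_desc hk (by omega) hv2
  rcases hd1 with ⟨h1,h2,u1,hA1,hp1⟩|⟨h1,h2,u1,hA1,hp1⟩|⟨h1,h2,h3,u1,hA1,hp1⟩|⟨h1,h2,u1,hA1,hp1⟩|⟨h1,h2,u1,hA1,hp1⟩|⟨h1,h2,u1,hA1,hp1⟩|⟨h1,h2,u1,hA1,hp1⟩|⟨h1,h2,h3,h4,u1,hA1,hp1⟩|⟨h1,h2,u1,hA1,hp1⟩ <;>
  rcases hd2 with ⟨h1',h2',u2,hA2,hp2'⟩|⟨h1',h2',u2,hA2,hp2'⟩|⟨h1',h2',h3',u2,hA2,hp2'⟩|⟨h1',h2',u2,hA2,hp2'⟩|⟨h1',h2',u2,hA2,hp2'⟩|⟨h1',h2',u2,hA2,hp2'⟩|⟨h1',h2',u2,hA2,hp2'⟩|⟨h1',h2',h3',h4',u2,hA2,hp2'⟩|⟨h1',h2',u2,hA2,hp2'⟩ <;>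
  first
    | omega
    | (obtain rfl := hA1.inj hA2; omega)

theorem no_pair_3 (k : ℕ) (hk : 1 ≤ k) :
    ¬ ∃ v : List ℕ, v.length = 2 ∧ OccursWithoutOverlap v (wk k) 3 := by
  rintro ⟨v, hv2, gs, hgs, hw⟩
  rcases gs with _|⟨g0,_|⟨g1,_|⟨g2,_|⟨g3,_|⟨g4,gs⟩⟩⟩⟩⟩ <;> try simp at hgs
  obtain ⟨a, b, rfl⟩ := List.length_eq_two.mp hv2
  rw [List.intercalate] at hw
  simp only [List.intersperse, List.flatten, List.append_nil] at hw
  rw [wk_eq] at hw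
  have e2 : (chunks k).flatten = (g0 ++ ([a,b] ++ g1)) ++ ([a,b] ++ (g2 ++ ([a,b] ++ g3))) := by
    rw [hw]; simp [List.append_assoc]
  have e3 : (chunks k).flatten = ((g0 ++ ([a,b] ++ g1)) ++ ([a,b] ++ g2)) ++ ([a,b] ++ g3) := by
    rw [hw]; simp [List.append_assoc]
  obtain ⟨hle1, hv1⟩ := occAt_parts hw
  obtain ⟨hle2, hv2'⟩ := occAt_parts e2
  obtain ⟨hle3, hv3'⟩ := occAt_parts e3
  have hp2 : (g0 ++ ([a,b] ++ g1)).length = g0.length + 2 + g1.length := by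
    simp [List.length_append]; omega
  have hp3 : ((g0 ++ ([a,b] ++ g1)) ++ ([a,b] ++ g2)).length
      = g0.length + 2 + g1.length + 2 + g2.length := by
    simp [List.length_append]; omega
  rw [hp2] at hle2 hv2'
  rw [hp3] at hle3 hv3'
  simp only [List.length_cons, List.length_nil, Nat.reduceAdd] at hle1 hle2 hle3 hv1 hv2' hv3'
  have hd1 := pair_desc hk (by omega) hv1
  have hd2 := pair_desc hk (by omega) hv2'
  have hd3 := pair_desc hk (by omega) hv3'
  rcases hd1 with ⟨h1,u1,hA1,hp1⟩|⟨h1,u1,hA1,hp1⟩|⟨h1,u1,hA1,hp1⟩|⟨h1,⟨u1,hA1,hp1⟩|⟨u1,hA1,hp1⟩⟩|⟨h1,u1,hA1,hp1⟩ <;>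
  rcases hd2 with ⟨h2,u2,hA2,hp2'⟩|⟨h2,u2,hA2,hp2'⟩|⟨h2,u2,hA2,hp2'⟩|⟨h2,⟨u2,hA2,hp2'⟩|⟨u2,hA2,hp2'⟩⟩|⟨h2,u2,hA2,hp2'⟩ <;>
  rcases hd3 with ⟨h3,u3,hA3,hp3'⟩|⟨h3,u3,hA3,hp3'⟩|⟨h3,u3,hA3,hp3'⟩|⟨h3,⟨u3,hA3,hp3'⟩|⟨u3,hA3,hp3'⟩⟩|⟨h3,u3,hA3,hp3'⟩ <;>
  first
    | omega
    | (have hq := hA1.inj hA2; subst hq; omega)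
    | (have hq := hA1.inj hA3; subst hq; omega)
    | (have hq := hA2.inj hA3; subst hq; omega)
    | (have hq := hA1.inj hA2; subst hq; have hq2 := hA1.inj hA3; subst hq2; omega)

end IW

/-- For every `k ≥ 1`, the word `wk k` is a word over an alphabet of `k` letters of
length `2k² + 2k + 1` in which no length-2 factor occurs 3 times without overlap and
no length-3 factor occurs twice without overlap. -/


theorem incompressible_word_exists (k : ℕ) (hk : 1 ≤ k) :
    (∀ x ∈ wk k, x ∈ Finset.Icc 1 k) ∧
    (wk k).length = 2 * k ^ 2 + 2 * k + 1 ∧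
    (¬ ∃ v : List ℕ, v.length = 2 ∧ OccursWithoutOverlap v (wk k) 3) ∧
    (¬ ∃ v : List ℕ, v.length = 3 ∧ OccursWithoutOverlap v (wk k) 2) := by
  refine ⟨?_, ?_, IW.no_pair_3 k hk, IW.no_triple_2 k hk⟩
  · intro x hx
    rw [IW.wk_eq] at hx
    rw [Finset.mem_Icc]
    exact IW.mem_bounds hx
  · rw [IW.wk_eq]
    exact IW.len_chunks k hk
end

section
/- A word v ∈ {a,b}^* is a factor of some word in the image of φ if and only if v contains no factor of the form a^k, where φ: {c₀,…,c_{k-1}}^* → {a,b}^* is the homomorphism with φ(c_i) = a^i b. -/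
/-- The binary encoding `φ : {c₀,…,c_{k-1}}^* → {a,b}^*`, `φ(c_i) = aⁱb`,
where `a := true` and `b := false`. -/
def phi {k : ℕ} (w : List (Fin k)) : List Bool :=
  (w.map (fun c => List.replicate (c : ℕ) true ++ [false])).flatten

/-- Run lengths of `true`-runs in a binary word (separated by `false`s). -/
def runLens : List Bool → List ℕ
  | [] => [0]
  | false :: v => 0 :: runLens v
  | true :: v =>
    match runLens v with
    | [] => [1]
    | r :: rs => (r + 1) :: rs

theorem runLens_ne_nil (v : List Bool) : runLens v ≠ [] := by
  match v with
  | [] => simp [runLens]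
  | false :: v => simp [runLens]
  | true :: v =>
    cases h : runLens v with
    | nil => simp [runLens, h]
    | cons r rs => simp [runLens, h]

theorem runLens_join (v : List Bool) :
    ((runLens v).map (fun r => List.replicate r true ++ [false])).flatten = v ++ [false] := by
  match v with
  | [] => simp [runLens]
  | false :: v => simpa [runLens] using runLens_join v
  | true :: v =>
    cases h : runLens v with
    | nil => exact absurd h (runLens_ne_nil v)
    | cons r rs =>
      have IH := runLens_join v
      rw [h] at IH
      simp only [runLens, h, List.map_cons, List.flatten_cons, List.replicate_succ,
        List.cons_append] at *
      simpa using IH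

theorem runLens_headI_prefix (v : List Bool) :
    List.replicate (runLens v).headI true <+: v := by
  match v with
  | [] => simp [runLens]
  | false :: v => simp [runLens]
  | true :: v =>
    cases h : runLens v with
    | nil => exact absurd h (runLens_ne_nil v)
    | cons r rs =>
      have IH := runLens_headI_prefix v
      rw [h] at IH
      simp only [runLens, h, List.headI, List.replicate_succ] at *
      exact (List.cons_prefix_cons).2 ⟨rfl, IH⟩

theorem runLens_mem_infix (v : List Bool) (r : ℕ) (hr : r ∈ runLens v) :
    List.replicate r true <:+: v := by
  match v with
  | [] =>
    simp [runLens] at hr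
    simp [hr]
  | false :: v =>
    simp only [runLens, List.mem_cons] at hr
    rcases hr with rfl | hr
    · simp
    · exact (List.infix_cons_iff).2 (Or.inr (runLens_mem_infix v r hr))
  | true :: v =>
    cases h : runLens v with
    | nil => exact absurd h (runLens_ne_nil v)
    | cons r0 rs =>
      simp only [runLens, h, List.mem_cons] at hr
      rcases hr with rfl | hr
      · have IH := runLens_headI_prefix v
        rw [h] at IH
        simp only [List.headI] at IH
        rw [List.replicate_succ]
        exact ((List.cons_prefix_cons).2 ⟨rfl, IH⟩).isInfix
      · exact (List.infix_cons_iff).2 (Or.inr (runLens_mem_infix v r (h ▸ List.mem_cons_of_mem r0 hr)))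

theorem prefix_split (m : ℕ) (A B : List Bool)
    (h : List.replicate m true <+: A ++ false :: B) : List.replicate m true <+: A := by
  induction A generalizing m with
  | nil =>
    cases m with
    | zero => simp
    | succ m =>
      rw [List.replicate_succ, List.nil_append] at h
      exact absurd ((List.cons_prefix_cons).1 h).1 (by simp)
  | cons a A ih =>
    cases m with
    | zero => simp
    | succ m =>
      rw [List.replicate_succ, List.cons_append] at h
      obtain ⟨ha, h'⟩ := (List.cons_prefix_cons).1 h
      rw [List.replicate_succ]
      exact (List.cons_prefix_cons).2 ⟨ha, ih m h'⟩

theorem infix_split (k : ℕ) (hk : 1 ≤ k) (A B : List Bool)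
    (h : List.replicate k true <:+: A ++ false :: B) :
    List.replicate k true <:+: A ∨ List.replicate k true <:+: B := by
  induction A with
  | nil =>
    rw [List.nil_append, List.infix_cons_iff] at h
    rcases h with h | h
    · obtain ⟨m, rfl⟩ := Nat.exists_eq_add_of_le hk
      rw [Nat.add_comm, List.replicate_succ] at h
      exact absurd ((List.cons_prefix_cons).1 h).1 (by simp)
    · exact Or.inr h
  | cons a A ih =>
    rw [List.cons_append, List.infix_cons_iff] at h
    rcases h with h | h
    · obtain ⟨m, rfl⟩ := Nat.exists_eq_add_of_le hk
      rw [Nat.add_comm, List.replicate_succ] at h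
      obtain ⟨ha, h'⟩ := (List.cons_prefix_cons).1 h
      left
      rw [Nat.add_comm, List.replicate_succ]
      exact ((List.cons_prefix_cons).2 ⟨ha, prefix_split m A B h'⟩).isInfix
    · rcases ih h with h | h
      · exact Or.inl ((List.infix_cons_iff).2 (Or.inr h))
      · exact Or.inr h

theorem phi_eq {k : ℕ} (w : List (Fin k)) :
    phi w = ((w.map Fin.val).map (fun c => List.replicate c true ++ [false])).flatten := by
  rw [phi]
  induction w with
  | nil => rfl
  | cons c w ih => simpa using ih

theorem not_replicate_infix_phi (k : ℕ) (hk : 1 ≤ k) (w : List (Fin k)) :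
    ¬ (List.replicate k true <:+: phi w) := by
  induction w with
  | nil =>
    intro h
    rw [show phi ([] : List (Fin k)) = [] from rfl, List.infix_nil,
      List.replicate_eq_nil_iff] at h
    omega
  | cons c w ih =>
    intro h
    have hphi : phi (c :: w) = List.replicate (c : ℕ) true ++ false :: phi w := by
      rw [phi_eq, phi_eq (w := w)]
      simp [List.append_assoc]
    rw [hphi] at h
    rcases infix_split k hk _ _ h with h | h
    · have := (List.replicate_sublist_replicate true).1 h.sublist
      exact absurd (lt_of_le_of_lt this c.isLt) (lt_irrefl _)
    · exact ih h

/-- A binary word is a factor of some word in the image of `φ` iff it does not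
contain `a^k` (i.e. `k` consecutive `a`'s) as a factor. -/
theorem phi_factor_characterization (k : ℕ) (hk : 1 ≤ k) (v : List Bool) :
    (∃ w : List (Fin k), v <:+: phi w) ↔ ¬ (List.replicate k true <:+: v) := by
  constructor
  · rintro ⟨w, hw⟩ h
    exact not_replicate_infix_phi k hk w (h.trans hw)
  · intro h
    have H : ∀ r ∈ runLens v, r < k := by
      intro r hr
      by_contra hge
      push_neg at hge
      apply h
      refine List.IsInfix.trans ?_ (runLens_mem_infix v r hr)
      obtain ⟨m, rfl⟩ := Nat.exists_eq_add_of_le hge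
      rw [List.replicate_add]
      exact (List.prefix_append _ _).isInfix
    refine ⟨List.pmap (fun r (hr : r < k) => (⟨r, hr⟩ : Fin k)) (runLens v) H, ?_⟩
    have : phi (k := k) (List.pmap (fun r (hr : r < k) => (⟨r, hr⟩ : Fin k)) (runLens v) H)
        = v ++ [false] := by
      rw [phi_eq, List.map_pmap]
      simp only [Fin.val_mk]
      rw [List.pmap_eq_map, List.map_id']
      exact runLens_join v
    rw [this]
    exact (List.prefix_append v [false]).isInfix
end

section
/- Let Σ = {c₀,…,c_{k-1}} and φ: Σ^* → {a,b}^* the homomorphism with φ(c_i) = a^i b. For every w ∈ Σ^*, from any SLP B producing φ(w) one can obtain an SLP producing w of size at most 2·|B|; in particular g(w) ≤ 2·g(φ(w)). -/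
set_option linter.deprecated false
set_option maxHeartbeats 1000000

section Aux

open List

namespace SlpAux

/-! ### Decoding functions on boolean words -/

def dec : ℕ → List Bool → List ℕ
  | _, [] => []
  | p, true :: u => dec (p+1) u
  | p, false :: u => p :: dec 0 u

def carry : ℕ → List Bool → ℕ
  | p, [] => p
  | p, true :: u => carry (p+1) u
  | _, false :: u => carry 0 u

def lead (u : List Bool) : ℕ := (u.takeWhile (fun b => b)).length

lemma dec_append (p : ℕ) (u v : List Bool) :
    dec p (u ++ v) = dec p u ++ dec (carry p u) v := by
  induction u generalizing p with
  | nil => simp [dec, carry]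
  | cons a u ih => cases a <;> simp [dec, carry, ih]

lemma carry_append (p : ℕ) (u v : List Bool) :
    carry p (u ++ v) = carry (carry p u) v := by
  induction u generalizing p with
  | nil => simp [carry]
  | cons a u ih => cases a <;> simp [carry, ih]

lemma carry_indep (p q : ℕ) {u : List Bool} (h : false ∈ u) :
    carry p u = carry q u := by
  induction u generalizing p q with
  | nil => simp at h
  | cons a u ih =>
    cases a
    · simp [carry]
    · have hu : false ∈ u := by simpa using h
      simpa [carry] using ih _ _ hu

lemma carry_no_false (p : ℕ) {u : List Bool} (h : false ∉ u) :
    carry p u = p + u.length := by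
  induction u generalizing p with
  | nil => simp [carry]
  | cons a u ih =>
    cases a
    · simp at h
    · have hu : false ∉ u := fun hm => h (List.mem_cons_of_mem _ hm)
      show carry (p+1) u = p + (u.length + 1)
      rw [ih (p+1) hu]
      omega

lemma length_dec (p : ℕ) (u : List Bool) : (dec p u).length = u.count false := by
  induction u generalizing p with
  | nil => simp [dec]
  | cons a u ih => cases a <;> simp [dec, ih, List.count_cons]

lemma dec_of_not_mem (p : ℕ) {u : List Bool} (h : false ∉ u) : dec p u = [] := by
  have := length_dec p u
  rw [List.count_eq_zero_of_not_mem h] at this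
  exact List.eq_nil_of_length_eq_zero this

lemma dec_cons_head (p : ℕ) {u : List Bool} (h : false ∈ u) :
    dec p u = (p + lead u) :: (dec 0 u).drop 1 := by
  induction u generalizing p with
  | nil => simp at h
  | cons a u ih =>
    cases a
    · simp [dec, lead]
    · have hu : false ∈ u := by simpa using h
      have hl : lead (true :: u) = lead u + 1 := by simp [lead, List.takeWhile_cons]
      show dec (p+1) u = (p + lead (true :: u)) :: (dec 1 u).drop 1
      rw [ih (p+1) hu, ih 1 hu, hl]
      simp only [List.drop_one, List.tail_cons]
      congr 1
      omega

lemma dec_drop (p : ℕ) (u : List Bool) : (dec p u).drop 1 = (dec 0 u).drop 1 := by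
  by_cases h : false ∈ u
  · rw [dec_cons_head p h, dec_cons_head 0 h]
    simp
  · rw [dec_of_not_mem p h, dec_of_not_mem 0 h]

lemma dec_replicate (p m : ℕ) (v : List Bool) :
    dec p (List.replicate m true ++ v) = dec (p + m) v := by
  induction m generalizing p with
  | zero => simp
  | succ m ih =>
    rw [List.replicate_succ, List.cons_append]
    show dec (p+1) (List.replicate m true ++ v) = _
    rw [ih (p+1)]
    congr 1
    omega

lemma dec_phi {k : ℕ} (w : List (Fin k)) : dec 0 (phi w) = w.map Fin.val := by
  induction w with
  | nil => simp [phi, dec]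
  | cons c w ih =>
    have : phi (c :: w) = List.replicate (c : ℕ) true ++ (false :: phi w) := by
      simp [phi]
    rw [this, dec_replicate]
    simp [dec, ih]

lemma dec_lt_of_infix {k : ℕ} {u' u : List Bool} (h : u' <:+: u)
    (H : ∀ m ∈ dec 0 u, m < k) : ∀ m ∈ dec 0 u', m < k := by
  obtain ⟨x, y, hxy⟩ := h
  subst hxy
  intro m hm
  by_cases hf : false ∈ u'
  · have e0 : dec 0 u' = (0 + lead u') :: (dec 0 u').drop 1 := dec_cons_head 0 hf
    have ec : dec (carry 0 x) u' = (carry 0 x + lead u') :: (dec 0 u').drop 1 :=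
      dec_cons_head _ hf
    have hm1 : ∀ m', m' ∈ dec (carry 0 x) u' → m' < k := by
      intro m' hmem
      apply H
      rw [List.append_assoc, dec_append, dec_append]
      simp [hmem]
    rw [e0] at hm
    rcases List.mem_cons.1 hm with h1 | h1
    · have : carry 0 x + lead u' < k := hm1 _ (by rw [ec]; exact List.mem_cons_self)
      omega
    · exact hm1 m (by rw [ec]; exact List.mem_cons_of_mem _ h1)
  · rw [dec_of_not_mem 0 hf] at hm
    simp at hm

/-! ### Generic SLP lemmas -/

def ev {α : Type} (G : SLP α) : α ⊕ Fin G.n → List α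
  | Sum.inl a => [a]
  | Sum.inr j => G.valAux j

lemma attach_bind {β γ : Type _} (l : List β) (F : β → List γ) :
    (l.attach.flatMap fun s => F s.1) = l.flatMap F := by
  induction l with
  | nil => rfl
  | cons a l ih =>
    simp only [List.attach_cons, List.flatMap_cons, List.flatMap_map]
    rw [← ih]

lemma valAux_eq {α : Type} (G : SLP α) (i : Fin G.n) :
    G.valAux i = (G.rhs i).flatMap (ev G) := by
  rw [SLP.valAux]
  have h : (fun (s : {x // x ∈ G.rhs i}) =>
      (match s with
      | ⟨Sum.inl a, _⟩ => [a]
      | ⟨Sum.inr j, _⟩ => G.valAux j)) = fun s => ev G s.1 := by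
    funext s
    rcases s with ⟨s | s, hs⟩ <;> rfl
  rw [h, attach_bind]

lemma valAux_ne {α : Type} (G : SLP α) : ∀ (n : ℕ) (i : Fin G.n), (i : ℕ) < n → G.valAux i ≠ [] := by
  intro n
  induction n with
  | zero => intro i h; omega
  | succ n ih =>
    intro i hi
    rw [valAux_eq]
    cases h : G.rhs i with
    | nil => exact absurd h (G.rhs_ne i)
    | cons s l =>
      simp only [List.flatMap_cons]
      intro hcon
      rcases List.append_eq_nil_iff.1 hcon with ⟨h1, _⟩
      cases s with
      | inl a => simp [ev] at h1
      | inr j =>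
        have hj : (j : ℕ) < (i : ℕ) := G.acyc i j (h ▸ List.mem_cons_self)
        exact ih j (by omega) h1

lemma val_ne {α : Type} (G : SLP α) : G.val ≠ [] :=
  valAux_ne G ((G.start : ℕ) + 1) G.start (Nat.lt_succ_self _)

end SlpAux

end Aux

namespace SlpAux

/-! ### The decoding SLP construction -/

variable (k : ℕ) (hk : 1 ≤ k) (B : SLP Bool)

def lett (m : ℕ) : Fin k := ⟨min m (k-1), by omega⟩

def tailE : Bool ⊕ Fin B.n → List (Fin k ⊕ Fin B.n)
  | Sum.inl _ => []
  | Sum.inr j => if 2 ≤ (B.valAux j).count false then [Sum.inr j] else []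

def em (st : Option ℕ) (s : Bool ⊕ Fin B.n) : List (Fin k ⊕ Fin B.n) :=
  if false ∈ ev B s then
    (match st with
      | none => []
      | some p => [Sum.inl (lett k hk (p + lead (ev B s)))]) ++ tailE k B s
  else []

def nxt (st : Option ℕ) (s : Bool ⊕ Fin B.n) : Option ℕ :=
  match st with
  | some p => some (carry p (ev B s))
  | none => if false ∈ ev B s then some (carry 0 (ev B s)) else none

def emits : Option ℕ → List (Bool ⊕ Fin B.n) → List (Fin k ⊕ Fin B.n)
  | _, [] => []
  | st, s :: l => em k hk B st s ++ emits (nxt B st s) l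

def rhs' (i : Fin B.n) : List (Fin k ⊕ Fin B.n) :=
  emits k hk B (if i = B.start then some 0 else none) (B.rhs i)

lemma mem_em {st : Option ℕ} {s : Bool ⊕ Fin B.n} {j : Fin B.n}
    (h : Sum.inr j ∈ em k hk B st s) : s = Sum.inr j := by
  unfold em at h
  split at h
  · rcases List.mem_append.1 h with h | h
    · rcases st with _ | p <;> simp at h
    · cases s with
      | inl a => simp [tailE] at h
      | inr j' =>
        simp only [tailE] at h
        split at h <;> simp at h
        rw [h]
  · simp at h

lemma mem_emits {j : Fin B.n} : ∀ (l : List (Bool ⊕ Fin B.n)) (st : Option ℕ),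
    Sum.inr j ∈ emits k hk B st l → Sum.inr j ∈ l := by
  intro l
  induction l with
  | nil => intro st h; simp [emits] at h
  | cons s l ih =>
    intro st h
    rcases List.mem_append.1 h with h | h
    · rw [← mem_em k hk B h]; exact List.mem_cons_self
    · exact List.mem_cons_of_mem _ (ih _ h)

lemma length_em (st : Option ℕ) (s : Bool ⊕ Fin B.n) : (em k hk B st s).length ≤ 2 := by
  unfold em
  split
  · rw [List.length_append]
    have h1 : (match st with
      | none => ([] : List (Fin k ⊕ Fin B.n))
      | some p => [Sum.inl (lett k hk (p + lead (ev B s)))]).length ≤ 1 := by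
      rcases st with _ | p <;> simp
    have h2 : (tailE k B s).length ≤ 1 := by
      cases s with
      | inl a => simp [tailE]
      | inr j' =>
        simp only [tailE]
        split <;> simp
    omega
  · simp

lemma length_emits : ∀ (l : List (Bool ⊕ Fin B.n)) (st : Option ℕ),
    (emits k hk B st l).length ≤ 2 * l.length := by
  intro l
  induction l with
  | nil => intro st; simp [emits]
  | cons s l ih =>
    intro st
    show (em k hk B st s ++ emits k hk B (nxt B st s) l).length ≤ 2 * (s :: l).length
    rw [List.length_append]
    have := length_em k hk B st s
    have := ih (nxt B st s)
    simp only [List.length_cons]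
    omega

def decSLP : SLP (Fin k) where
  n := B.n
  rhs i := if rhs' k hk B i = [] then [Sum.inl (⟨0, hk⟩ : Fin k)] else rhs' k hk B i
  rhs_ne i := by
    by_cases h : rhs' k hk B i = [] <;> simp [h]
  acyc i j hj := by
    by_cases h : rhs' k hk B i = []
    · rw [if_pos h] at hj
      simp at hj
    · rw [if_neg h] at hj
      exact B.acyc i j (mem_emits k hk B _ _ hj)
  start := B.start

def decSt : Option ℕ → List Bool → List ℕ
  | none, u => (dec 0 u).drop 1
  | some p, u => dec p u

end SlpAux

namespace SlpAux

variable (k : ℕ) (hk : 1 ≤ k) (B : SLP Bool)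

lemma tail_spec (i : Fin B.n)
    (IH : ∀ j : Fin B.n, (j : ℕ) < (i : ℕ) → (∀ m ∈ dec 0 (B.valAux j), m < k) →
      2 ≤ (B.valAux j).count false →
      ((decSLP k hk B).valAux j).map Fin.val = (dec 0 (B.valAux j)).drop 1)
    (s : Bool ⊕ Fin B.n) (hs : ∀ j : Fin B.n, s = Sum.inr j → (j : ℕ) < (i : ℕ))
    (hf : false ∈ ev B s) (Hu : ∀ m ∈ dec 0 (ev B s), m < k) :
    ((tailE k B s).flatMap (ev (decSLP k hk B))).map Fin.val = (dec 0 (ev B s)).drop 1 := by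
  cases s with
  | inl a =>
    cases a
    · simp [tailE, ev, dec]; rfl
    · simp [ev] at hf
  | inr j =>
    have hj := hs j rfl
    have hfv : false ∈ B.valAux j := hf
    by_cases h2 : 2 ≤ (B.valAux j).count false
    · have hIH := IH j hj Hu h2
      have : (tailE k B (Sum.inr j)).flatMap (ev (decSLP k hk B))
          = (decSLP k hk B).valAux j := by
        simp [tailE, h2, ev]; exact List.append_nil _
      rw [this, hIH]
      rfl
    · have h1 : (B.valAux j).count false = 1 := by
        have : 0 < (B.valAux j).count false := List.count_pos_iff.2 hfv
        omega
      have hlen : (dec 0 (B.valAux j)).length = 1 := by rw [length_dec, h1]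
      have hdrop : (dec 0 (B.valAux j)).drop 1 = [] := by
        apply List.eq_nil_of_length_eq_zero
        simp [hlen]
      have : (tailE k B (Sum.inr j)) = [] := by simp [tailE, h2]
      rw [this]
      exact hdrop.symm

lemma emits_spec (i : Fin B.n)
    (IH : ∀ j : Fin B.n, (j : ℕ) < (i : ℕ) → (∀ m ∈ dec 0 (B.valAux j), m < k) →
      2 ≤ (B.valAux j).count false →
      ((decSLP k hk B).valAux j).map Fin.val = (dec 0 (B.valAux j)).drop 1) :
    ∀ (l : List (Bool ⊕ Fin B.n)) (st : Option ℕ) (v : List Bool),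
      (∀ j : Fin B.n, Sum.inr j ∈ l → (j : ℕ) < (i : ℕ)) →
      (∀ p, st = some p → p = carry 0 v) →
      (st = none → false ∉ v) →
      (∀ m ∈ dec 0 (v ++ l.flatMap (ev B)), m < k) →
      ((emits k hk B st l).flatMap (ev (decSLP k hk B))).map Fin.val
        = decSt st (l.flatMap (ev B)) := by
  intro l
  induction l with
  | nil =>
    intro st v _ _ _ _
    cases st <;> simp [emits, decSt, dec] <;> rfl
  | cons s l ihl =>
    intro st v hsym hsome hnone Hlt
    have hs : ∀ j : Fin B.n, s = Sum.inr j → (j : ℕ) < (i : ℕ) :=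
      fun j hj => hsym j (hj ▸ List.mem_cons_self)
    have hsym' : ∀ j : Fin B.n, Sum.inr j ∈ l → (j : ℕ) < (i : ℕ) :=
      fun j hj => hsym j (List.mem_cons_of_mem _ hj)
    have hjoin : (s :: l).flatMap (ev B) = ev B s ++ l.flatMap (ev B) := by
      simp [List.flatMap_cons]
    have hsplit : ((emits k hk B st (s :: l)).flatMap (ev (decSLP k hk B))).map Fin.val
        = ((em k hk B st s).flatMap (ev (decSLP k hk B))).map Fin.val
          ++ ((emits k hk B (nxt B st s) l).flatMap (ev (decSLP k hk B))).map Fin.val := by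
      show (((em k hk B st s ++ emits k hk B (nxt B st s) l)).flatMap _).map Fin.val = _
      exact (congrArg (List.map Fin.val) (List.flatMap_append ..)).trans (List.map_append ..)
    have Hlt' : ∀ m ∈ dec 0 ((v ++ ev B s) ++ l.flatMap (ev B)), m < k := by
      intro m hm
      apply Hlt
      rw [hjoin, ← List.append_assoc]
      exact hm
    by_cases hf : false ∈ ev B s
    · have Hu : ∀ m ∈ dec 0 (ev B s), m < k := by
        apply dec_lt_of_infix (u := v ++ (s :: l).flatMap (ev B)) _ Hlt
        exact ⟨v, l.flatMap (ev B), by rw [hjoin, List.append_assoc]⟩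
      have htail := tail_spec k hk B i IH s hs hf Hu
      have hcnt : 0 < (dec 0 (ev B s)).length := by
        rw [length_dec]
        exact List.count_pos_iff.2 hf
      cases st with
      | some p =>
        have hp : p = carry 0 v := hsome p rfl
        have hmem : p + lead (ev B s) ∈ dec 0 (v ++ (s :: l).flatMap (ev B)) := by
          rw [hjoin, dec_append, dec_append, ← hp, dec_cons_head p hf]
          simp
        have hlt : p + lead (ev B s) < k := Hlt _ hmem
        have hlett : ((lett k hk (p + lead (ev B s))) : ℕ) = p + lead (ev B s) := by
          show min (p + lead (ev B s)) (k-1) = p + lead (ev B s)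
          omega
        have e1 : em k hk B (some p) s
            = Sum.inl (lett k hk (p + lead (ev B s))) :: tailE k B s := by
          simp [em, hf]
        have hrec := ihl (some (carry p (ev B s))) (v ++ ev B s)
          hsym'
          (by
            intro q hq
            have hq' : q = carry p (ev B s) := by injection hq; omega
            rw [hq', carry_append, ← hp])
          (by intro h; exact absurd h (by simp))
          Hlt'
        rw [hsplit]
        have hnxt : nxt B (some p) s = some (carry p (ev B s)) := rfl
        rw [hnxt, hrec, e1]
        show ((lett k hk (p + lead (ev B s)) : Fin k) :: ((tailE k B s).flatMap (ev (decSLP k hk B)))).map Fin.val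
            ++ dec (carry p (ev B s)) (l.flatMap (ev B)) = decSt (some p) ((s :: l).flatMap (ev B))
        rw [List.map_cons, htail, hlett]
        show (p + lead (ev B s)) :: (dec 0 (ev B s)).drop 1 ++ dec (carry p (ev B s)) (l.flatMap (ev B))
            = dec p ((s :: l).flatMap (ev B))
        rw [hjoin, dec_append, dec_cons_head p hf]
      | none =>
        have hnv : false ∉ v := hnone rfl
        have e1 : em k hk B none s = tailE k B s := by
          simp [em, hf]
        have hcarry : carry 0 (ev B s) = carry 0 (v ++ ev B s) := by
          rw [carry_append]
          exact carry_indep _ _ hf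
        have hrec := ihl (some (carry 0 (ev B s))) (v ++ ev B s)
          hsym'
          (by
            intro q hq
            have hq' : q = carry 0 (ev B s) := by injection hq; omega
            rw [hq', hcarry])
          (by intro h; exact absurd h (by simp))
          Hlt'
        rw [hsplit]
        have hnxt : nxt B none s = some (carry 0 (ev B s)) := by simp [nxt, hf]
        rw [hnxt, hrec, e1, htail]
        show (dec 0 (ev B s)).drop 1 ++ dec (carry 0 (ev B s)) (l.flatMap (ev B))
            = decSt none ((s :: l).flatMap (ev B))
        show _ = (dec 0 ((s :: l).flatMap (ev B))).drop 1
        rw [hjoin, dec_append, List.drop_append_of_le_length (by omega)]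
    · have e1 : em k hk B st s = [] := by simp [em, hf]
      have hdec0 : dec 0 (ev B s) = [] := dec_of_not_mem 0 hf
      cases st with
      | some p =>
        have hp : p = carry 0 v := hsome p rfl
        have hrec := ihl (some (carry p (ev B s))) (v ++ ev B s)
          hsym'
          (by
            intro q hq
            have hq' : q = carry p (ev B s) := by injection hq; omega
            rw [hq', carry_append, ← hp])
          (by intro h; exact absurd h (by simp))
          Hlt'
        have hnxt : nxt B (some p) s = some (carry p (ev B s)) := rfl
        rw [hsplit, e1, hnxt, hrec]
        show [] ++ dec (carry p (ev B s)) (l.flatMap (ev B)) = decSt (some p) ((s :: l).flatMap (ev B))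
        show _ = dec p ((s :: l).flatMap (ev B))
        rw [hjoin, dec_append, dec_of_not_mem p hf]
      | none =>
        have hnv : false ∉ v := hnone rfl
        have hnxt : nxt B none s = none := by simp [nxt, hf]
        have hrec := ihl none (v ++ ev B s)
          hsym'
          (by intro q hq; exact absurd hq (by simp))
          (by
            intro _
            rw [List.mem_append]
            push_neg
            exact ⟨hnv, hf⟩)
          Hlt'
        rw [hsplit, e1, hnxt, hrec]
        show [] ++ (dec 0 (l.flatMap (ev B))).drop 1 = decSt none ((s :: l).flatMap (ev B))
        show _ = (dec 0 ((s :: l).flatMap (ev B))).drop 1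
        rw [List.nil_append, hjoin, dec_append, hdec0, List.nil_append, dec_drop (carry 0 (ev B s))]

end SlpAux

namespace SlpAux

variable (k : ℕ) (hk : 1 ≤ k) (B : SLP Bool)

lemma valA_spec : ∀ (n : ℕ) (i : Fin B.n), (i : ℕ) < n → (i : ℕ) ≤ (B.start : ℕ) →
    (∀ m ∈ dec 0 (B.valAux i), m < k) →
    decSt (if i = B.start then some 0 else none) (B.valAux i) ≠ [] →
    ((decSLP k hk B).valAux i).map Fin.val
      = decSt (if i = B.start then some 0 else none) (B.valAux i) := by
  intro n
  induction n with
  | zero => intro i h; omega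
  | succ n ihn =>
    intro i hin his Hlt hne
    have IH : ∀ j : Fin B.n, (j : ℕ) < (i : ℕ) → (∀ m ∈ dec 0 (B.valAux j), m < k) →
        2 ≤ (B.valAux j).count false →
        ((decSLP k hk B).valAux j).map Fin.val = (dec 0 (B.valAux j)).drop 1 := by
      intro j hj hlt hc
      have hjs : j ≠ B.start := by
        intro h
        have : (j : ℕ) = (B.start : ℕ) := by rw [h]
        omega
      have hlen : (dec 0 (B.valAux j)).length = (B.valAux j).count false := length_dec _ _
      have hres := ihn j (by omega) (by omega) hlt (by
        rw [if_neg hjs]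
        show (dec 0 (B.valAux j)).drop 1 ≠ []
        intro hcon
        have hl := congrArg List.length hcon
        simp only [List.length_drop, List.length_nil] at hl
        omega)
      rw [if_neg hjs] at hres
      exact hres
    have hspec := emits_spec k hk B i IH (B.rhs i) (if i = B.start then some 0 else none) []
      (fun j hj => B.acyc i j hj)
      (by
        intro p hp
        split at hp
        · injection hp with hp'
          rw [← hp']
          rfl
        · exact absurd hp (by simp))
      (by intro _; simp)
      (by
        intro m hm
        apply Hlt
        rwa [List.nil_append, ← valAux_eq] at hm)
    rw [← valAux_eq] at hspec
    have hrhs' : emits k hk B (if i = B.start then some 0 else none) (B.rhs i)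
        = rhs' k hk B i := rfl
    rw [hrhs'] at hspec
    by_cases hnil : rhs' k hk B i = []
    · exact absurd (by rw [← hspec, hnil]; rfl) hne
    · have hr : (decSLP k hk B).rhs i = rhs' k hk B i := by
        show (if rhs' k hk B i = [] then [Sum.inl ⟨0, hk⟩] else rhs' k hk B i) = rhs' k hk B i
        rw [if_neg hnil]
      rw [valAux_eq (decSLP k hk B) i, hr, hspec]

end SlpAux

theorem slp_decode' (k : ℕ) (hk : 1 ≤ k) (w : List (Fin k)) :
    (∀ B : SLP Bool, B.val = phi w →
      ∃ A : SLP (Fin k), A.val = w ∧ A.size ≤ 2 * B.size) ∧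
    g w ≤ 2 * g (phi w) := by
  have main : ∀ B : SLP Bool, B.val = phi w →
      ∃ A : SLP (Fin k), A.val = w ∧ A.size ≤ 2 * B.size := by
    intro B hB
    by_cases hw : w = []
    · subst hw
      have : phi ([] : List (Fin k)) = [] := by simp [phi]
      rw [this] at hB
      exact absurd hB (SlpAux.val_ne B)
    · refine ⟨SlpAux.decSLP k hk B, ?_, ?_⟩
      · have h2 : SlpAux.dec 0 (B.valAux B.start) = w.map Fin.val := by
          show SlpAux.dec 0 B.val = _
          rw [hB, SlpAux.dec_phi]
        have Hlt : ∀ m ∈ SlpAux.dec 0 (B.valAux B.start), m < k := by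
          rw [h2]
          intro m hm
          simp only [List.mem_map] at hm
          obtain ⟨c, _, rfl⟩ := hm
          exact c.isLt
        have hne : SlpAux.decSt (if B.start = B.start then some 0 else none)
            (B.valAux B.start) ≠ [] := by
          rw [if_pos rfl]
          show SlpAux.dec 0 (B.valAux B.start) ≠ []
          rw [h2]
          simpa using hw
        have hres := SlpAux.valA_spec k hk B ((B.start : ℕ) + 1) B.start
          (Nat.lt_succ_self _) le_rfl Hlt hne
        rw [if_pos rfl] at hres
        have hres' : ((SlpAux.decSLP k hk B).valAux B.start).map Fin.val
            = SlpAux.dec 0 (B.valAux B.start) := hres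
        rw [h2] at hres'
        exact List.map_injective_iff.2 Fin.val_injective hres'
      · show (SlpAux.decSLP k hk B).size ≤ 2 * B.size
        have hle : ∀ i : Fin B.n,
            ((SlpAux.decSLP k hk B).rhs i).length ≤ 2 * (B.rhs i).length := by
          intro i
          have hlen := SlpAux.length_emits k hk B (B.rhs i)
            (if i = B.start then some 0 else none)
          have hpos : 0 < (B.rhs i).length := List.length_pos_iff.2 (B.rhs_ne i)
          show ((if SlpAux.rhs' k hk B i = [] then [Sum.inl ⟨0, hk⟩]
              else SlpAux.rhs' k hk B i)).length ≤ 2 * (B.rhs i).length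
          split
          · simp only [List.length_cons, List.length_nil]
            omega
          · exact hlen
        calc (SlpAux.decSLP k hk B).size
            = ∑ i : Fin B.n, ((SlpAux.decSLP k hk B).rhs i).length := rfl
          _ ≤ ∑ i : Fin B.n, 2 * (B.rhs i).length :=
              Finset.sum_le_sum (fun i _ => hle i)
          _ = 2 * ∑ i : Fin B.n, (B.rhs i).length := by rw [Finset.mul_sum]
          _ = 2 * B.size := rfl
  refine ⟨main, ?_⟩
  by_cases hw : w = []
  · subst hw
    have hempty : { s | ∃ G : SLP (Fin k), G.size = s ∧ G.val = [] } = ∅ := by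
      ext s
      simp only [Set.mem_setOf_eq, Set.mem_empty_iff_false, iff_false, not_exists]
      rintro G ⟨_, hG⟩
      exact SlpAux.val_ne G hG
    have hg : g ([] : List (Fin k)) = 0 := by
      unfold g
      rw [hempty]
      exact Nat.sInf_empty
    rw [hg]
    exact Nat.zero_le _
  · have hphine : phi w ≠ [] := by
      cases w with
      | nil => exact absurd rfl hw
      | cons c w' => simp [phi]
    let G0 : SLP Bool :=
      { n := 1
        rhs := fun _ => (phi w).map Sum.inl
        rhs_ne := fun i => by simp [hphine]
        acyc := fun i j hj => by simp at hj
        start := 0 }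
    have hG0val : G0.val = phi w := by
      show G0.valAux 0 = phi w
      rw [SlpAux.valAux_eq]
      show ((phi w).map Sum.inl).flatMap (SlpAux.ev G0) = phi w
      simp only [List.flatMap_map]
      have : ∀ u : List Bool, u.flatMap (fun a => SlpAux.ev G0 (Sum.inl a)) = u := by
        intro u
        induction u with
        | nil => rfl
        | cons a u ih => simp [List.flatMap_cons, SlpAux.ev, ih]
      exact this (phi w)
    have hnonempty : { s | ∃ G : SLP Bool, G.size = s ∧ G.val = phi w }.Nonempty :=
      ⟨G0.size, G0, rfl, hG0val⟩
    obtain ⟨B, hBsize, hBval⟩ := Nat.sInf_mem hnonempty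
    obtain ⟨A, hA1, hA2⟩ := main B hBval
    have h1 : g w ≤ A.size := Nat.sInf_le ⟨A, rfl, hA1⟩
    have h3 : B.size = g (phi w) := hBsize
    omega


/-- From any SLP `B` for `φ(w)` one obtains an SLP for `w` of size at most `2·|B|`;
in particular `g(w) ≤ 2·g(φ(w))`. -/
theorem slp_decode (k : ℕ) (hk : 1 ≤ k) (w : List (Fin k)) :
    (∀ B : SLP Bool, B.val = phi w →
      ∃ A : SLP (Fin k), A.val = w ∧ A.size ≤ 2 * B.size) ∧
    g w ≤ 2 * g (phi w) := by
  exact slp_decode' k hk w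
end
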